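/- arXiv:math/0607671 — 8 statements merged into one kernel-verified Lean document; each statement's English description precedes it below -/
import Mathlib

section
/- Let n ≥ 1 and let ρ_n(x,t) denote the word (t x t⁻¹) x (t x t⁻¹)⁻¹ x^{-(n+1)} in the free group on two generators x, t. Then the presented group Q_n = ⟨x, t | ρ_n(x,t), x^n⟩ is isomorphic to the HNN extension of ℤ/n × ℤ/n along the isomorphism φ from the first direct factor to the second direct factor sending a generator of ℤ/n × 1 to a generator of 1 × ℤ/n. -/
/-- The word `ρ_k(x,t) = (t x t⁻¹) x (t x t⁻¹)⁻¹ x^{-(k+1)}`, evaluated at elements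
`x`, `t` of a group. -/
def rhoWord {G : Type*} [Group G] (k : ℕ) (x t : G) : G :=
  (t * x * t⁻¹) * x * (t * x * t⁻¹)⁻¹ * x ^ (-(k + 1 : ℤ))

/-- The first direct factor `ℤ/n × 1` of `ℤ/n × ℤ/n` (written multiplicatively). -/
def firstFactor (n : ℕ) : Subgroup (Multiplicative (ZMod n) × Multiplicative (ZMod n)) :=
  (MonoidHom.inl _ _).range

/-- The second direct factor `1 × ℤ/n` of `ℤ/n × ℤ/n` (written multiplicatively). -/
def secondFactor (n : ℕ) : Subgroup (Multiplicative (ZMod n) × Multiplicative (ZMod n)) :=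
  (MonoidHom.inr _ _).range

lemma map_firstFactor (n : ℕ) :
    (firstFactor n).map (MulEquiv.prodComm :
      Multiplicative (ZMod n) × Multiplicative (ZMod n) ≃* _).toMonoidHom = secondFactor n := by
  ext p
  constructor
  · rintro ⟨y, ⟨c, rfl⟩, rfl⟩
    exact ⟨c, rfl⟩
  · rintro ⟨c, rfl⟩
    exact ⟨(MonoidHom.inl _ _) c, ⟨c, rfl⟩, rfl⟩

/-- The isomorphism `φ : ℤ/n × 1 ≃ 1 × ℤ/n` carrying the first direct factor of
`ℤ/n × ℤ/n` to the second, `(a, 1) ↦ (1, a)`; in particular it sends a generator of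
`ℤ/n × 1` to a generator of `1 × ℤ/n`. -/
noncomputable def phi (n : ℕ) : (firstFactor n) ≃* (secondFactor n) :=
  ((MulEquiv.prodComm :
      Multiplicative (ZMod n) × Multiplicative (ZMod n) ≃* _).subgroupMap
    (firstFactor n)).trans (MulEquiv.subgroupCongr (map_firstFactor n))

open Multiplicative

noncomputable def zmodHom {G : Type*} [Group G] (n : ℕ) (x : G) (hx : x ^ n = 1) :
    Multiplicative (ZMod n) →* G :=
  AddMonoidHom.toMultiplicativeLeft
    (ZMod.lift n ⟨zmultiplesHom (Additive G) (Additive.ofMul x), by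
      show (n : ℤ) • Additive.ofMul x = 0
      rw [← ofMul_zpow, zpow_natCast, hx]; rfl⟩)

lemma zmodHom_intCast {G : Type*} [Group G] (n : ℕ) (x : G) (hx : x ^ n = 1) (k : ℤ) :
    zmodHom n x hx (ofAdd ((k : ℤ) : ZMod n)) = x ^ k := by
  simp [zmodHom, AddMonoidHom.coe_toMultiplicativeLeft]

lemma zmodHom_one {G : Type*} [Group G] (n : ℕ) (x : G) (hx : x ^ n = 1) :
    zmodHom n x hx (ofAdd 1) = x := by
  have := zmodHom_intCast n x hx 1
  simpa using this

lemma zmod_hom_ext {n : ℕ} {M : Type*} [Group M] {f g : Multiplicative (ZMod n) →* M}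
    (h : f (ofAdd 1) = g (ofAdd 1)) : f = g := by
  apply MonoidHom.ext; intro a
  obtain ⟨k, hk⟩ := ZMod.intCast_surjective (a.toAdd)
  have ha : a = (ofAdd (1 : ZMod n)) ^ k := by
    rw [← ofAdd_zsmul, ← ofAdd_toAdd a, ← hk]
    norm_num
  rw [ha, map_zpow, map_zpow, h]

lemma phi_apply (n : ℕ) (c : Multiplicative (ZMod n)) (h : ((c, 1) : _) ∈ firstFactor n) :
    ((phi n ⟨(c, 1), h⟩ : (secondFactor n)) : Multiplicative (ZMod n) × Multiplicative (ZMod n))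
      = (1, c) := rfl

lemma prod_zpow {M N : Type*} [Group M] [Group N] (a : M) (b : N) (k : ℤ) :
    ((a, b) : M × N) ^ k = (a ^ k, b ^ k) := rfl

lemma prod_pow {M N : Type*} [Group M] [Group N] (a : M) (b : N) (k : ℕ) :
    ((a, b) : M × N) ^ k = (a ^ k, b ^ k) := rfl

lemma ofAdd_one_zpow (n : ℕ) (k : ℤ) :
    (ofAdd (1 : ZMod n)) ^ k = ofAdd ((k : ℤ) : ZMod n) := by
  rw [← ofAdd_zsmul]
  norm_num

lemma map_rhoWord {G H : Type*} [Group G] [Group H] (f : G →* H) (k : ℕ) (x t : G) :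
    f (rhoWord k x t) = rhoWord k (f x) (f t) := by
  simp [rhoWord]

/-- For `n ≥ 1`, the presented group `Q_n = ⟨x, t | ρ_n(x,t), x^n⟩` is
isomorphic to the HNN extension of `ℤ/n × ℤ/n` along the isomorphism `φ` from the first
direct factor to the second direct factor, `(a, 1) ↦ (1, a)`. -/
theorem Qn_iso_hnnExtension (n : ℕ) (hn : 1 ≤ n) :
    Nonempty
      (PresentedGroup ({rhoWord n (FreeGroup.of 0) (FreeGroup.of 1),
          FreeGroup.of 0 ^ n} : Set (FreeGroup (Fin 2))) ≃*
        HNNExtension (Multiplicative (ZMod n) × Multiplicative (ZMod n))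
          (firstFactor n) (secondFactor n) (phi n)) := by
  set rels : Set (FreeGroup (Fin 2)) :=
    {rhoWord n (FreeGroup.of 0) (FreeGroup.of 1), FreeGroup.of 0 ^ n} with hrels
  set Q := PresentedGroup rels
  set HNN := HNNExtension (Multiplicative (ZMod n) × Multiplicative (ZMod n))
    (firstFactor n) (secondFactor n) (phi n)
  set X : Q := PresentedGroup.of 0
  set T : Q := PresentedGroup.of 1
  -- relations in Q
  have hrel : ∀ r ∈ rels, PresentedGroup.mk rels r = 1 := fun r hr =>
    (QuotientGroup.eq_one_iff r).2 (Subgroup.subset_normalClosure hr)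
  have hXn : X ^ n = 1 := by
    have := hrel (FreeGroup.of 0 ^ n) (by simp [hrels])
    rw [map_pow] at this
    exact this
  have hrho : rhoWord n X T = 1 := by
    have := hrel (rhoWord n (FreeGroup.of 0) (FreeGroup.of 1)) (by simp [hrels])
    rw [map_rhoWord (PresentedGroup.mk rels)] at this
    exact this
  have hXz : X ^ (n : ℤ) = 1 := by rw [zpow_natCast, hXn]
  have hconj : (T * X * T⁻¹) * X * (T * X * T⁻¹)⁻¹ = X := by
    have h1 : X ^ (-(n + 1 : ℤ)) = X⁻¹ := by
      rw [neg_add, zpow_add, zpow_neg, zpow_neg, hXz, inv_one, one_mul, zpow_one]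
    have h2 := hrho
    rw [rhoWord, h1, mul_inv_eq_one] at h2
    exact h2
  have hc : Commute X (T * X * T⁻¹) := (mul_inv_eq_iff_eq_mul.mp hconj).symm
  have hA : (T * X * T⁻¹) ^ n = 1 := by
    have h := map_pow (MulAut.conj T) X n
    simp only [MulAut.conj_apply] at h
    rw [← h, hXn]
    simp
  set u : Multiplicative (ZMod n) := ofAdd 1 with hu_def
  have hu : u ^ n = 1 := by
    have : ((n : ℤ) • (1 : ZMod n)) = ((n : ℤ) : ZMod n) := by simp
    rw [hu_def, ← ofAdd_nsmul]
    simp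
  -- the map Q →* HNN
  set F : Fin 2 → HNN := ![HNNExtension.of (u, 1), HNNExtension.t] with hF_def
  have hmem : ((u, 1) : (Multiplicative (ZMod n) × Multiplicative (ZMod n))) ∈ firstFactor n := ⟨u, rfl⟩
  have hconjHNN : HNNExtension.t * HNNExtension.of ((u, 1) : (Multiplicative (ZMod n) × Multiplicative (ZMod n))) * HNNExtension.t⁻¹
      = (HNNExtension.of ((1, u) : (Multiplicative (ZMod n) × Multiplicative (ZMod n))) : HNN) := by
    have h := (HNNExtension.equiv_eq_conj (φ := phi n) ⟨(u, 1), hmem⟩).symm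
    rwa [phi_apply] at h
  have hFrels : ∀ r ∈ rels, FreeGroup.lift F r = 1 := by
    intro r hr
    rcases hr with hr | hr
    · subst hr
      rw [map_rhoWord]
      simp only [FreeGroup.lift_apply_of, hF_def, Matrix.cons_val_zero, Matrix.cons_val_one,
        Matrix.head_cons]
      have hun : (u : Multiplicative (ZMod n)) ^ (-(n + 1 : ℤ)) = u⁻¹ := by
        rw [neg_add, zpow_add, zpow_neg, zpow_neg, zpow_natCast, hu, inv_one, one_mul,
          zpow_one]
      have hK : ((1, u) * (u, 1) * (1, u)⁻¹ * (u, 1) ^ (-(n + 1 : ℤ)) : (Multiplicative (ZMod n) × Multiplicative (ZMod n))) = 1 := by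
        rw [prod_zpow, hun]
        ext <;> simp [mul_comm]
      rw [rhoWord, hconjHNN, ← map_inv, ← map_zpow, ← map_mul, ← map_mul, ← map_mul, hK,
        map_one]
    · simp only [Set.mem_singleton_iff] at hr
      subst hr
      rw [map_pow]
      simp only [FreeGroup.lift_apply_of, hF_def, Matrix.cons_val_zero]
      rw [← map_pow]
      have hK : ((u, 1) : (Multiplicative (ZMod n) × Multiplicative (ZMod n))) ^ n = 1 := by
        rw [prod_pow, hu]
        simp [Prod.ext_iff]
      rw [hK, map_one]
  set f : Q →* HNN := PresentedGroup.toGroup hFrels with hf_def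
  have hfX : f X = HNNExtension.of ((u, 1) : (Multiplicative (ZMod n) × Multiplicative (ZMod n))) := by
    rw [hf_def]; exact PresentedGroup.toGroup.of hFrels
  have hfT : f T = HNNExtension.t := by
    rw [hf_def]; exact PresentedGroup.toGroup.of hFrels
  -- the map (Multiplicative (ZMod n) × Multiplicative (ZMod n)) →* Q
  have comm : ∀ (a b : Multiplicative (ZMod n)),
      Commute (zmodHom n X hXn a) (zmodHom n (T * X * T⁻¹) hA b) := by
    intro a b
    obtain ⟨k, hk⟩ := ZMod.intCast_surjective a.toAdd
    obtain ⟨l, hl⟩ := ZMod.intCast_surjective b.toAdd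
    rw [show a = ofAdd ((k : ℤ) : ZMod n) by rw [hk]; simp,
      show b = ofAdd ((l : ℤ) : ZMod n) by rw [hl]; simp,
      zmodHom_intCast, zmodHom_intCast]
    exact hc.zpow_zpow k l
  set ψ : (Multiplicative (ZMod n) × Multiplicative (ZMod n)) →* Q := (zmodHom n X hXn).noncommCoprod (zmodHom n (T * X * T⁻¹) hA) comm
    with hψ_def
  have hψ1 : ∀ c : Multiplicative (ZMod n), ψ (c, 1) = zmodHom n X hXn c := by
    intro c; rw [hψ_def, MonoidHom.noncommCoprod_apply]; simp
  have hψ2 : ∀ c : Multiplicative (ZMod n), ψ (1, c) = zmodHom n (T * X * T⁻¹) hA c := by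
    intro c; rw [hψ_def, MonoidHom.noncommCoprod_apply]; simp
  have hT : ∀ a : firstFactor n, T * ψ a = ψ ((phi n a : secondFactor n) : (Multiplicative (ZMod n) × Multiplicative (ZMod n))) * T := by
    rintro ⟨_, c, rfl⟩
    show T * ψ (c, 1) = ψ ((phi n ⟨(c, 1), ⟨c, rfl⟩⟩ : secondFactor n) : (Multiplicative (ZMod n) × Multiplicative (ZMod n))) * T
    rw [show ((phi n ⟨(c, 1), ⟨c, rfl⟩⟩ : secondFactor n) : (Multiplicative (ZMod n) × Multiplicative (ZMod n))) = ((1, c) : (Multiplicative (ZMod n) × Multiplicative (ZMod n))) from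
      phi_apply n c _]
    rw [hψ1, hψ2]
    obtain ⟨k, hk⟩ := ZMod.intCast_surjective c.toAdd
    rw [show c = ofAdd ((k : ℤ) : ZMod n) by rw [hk]; simp, zmodHom_intCast, zmodHom_intCast]
    have h2 : (T * X * T⁻¹) ^ k = T * X ^ k * T⁻¹ := by
      have h := map_zpow (MulAut.conj T) X k
      simpa only [MulAut.conj_apply] using h.symm
    rw [h2]
    group
  set g : HNN →* Q := HNNExtension.lift ψ T hT with hg_def
  -- g ∘ f = id
  have hgf : g.comp f = MonoidHom.id Q := by
    apply PresentedGroup.ext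
    intro i
    fin_cases i
    · show g (f X) = X
      rw [hfX, hg_def, HNNExtension.lift_of, hψ1, zmodHom_one]
    · show g (f T) = T
      rw [hfT, hg_def, HNNExtension.lift_t]
  -- f ∘ g = id
  have hfg : f.comp g = MonoidHom.id HNN := by
    apply HNNExtension.hom_ext
    · apply MonoidHom.ext
      rintro ⟨a, b⟩
      obtain ⟨k, hk⟩ := ZMod.intCast_surjective a.toAdd
      obtain ⟨l, hl⟩ := ZMod.intCast_surjective b.toAdd
      rw [show a = ofAdd ((k : ℤ) : ZMod n) by rw [hk]; simp,
        show b = ofAdd ((l : ℤ) : ZMod n) by rw [hl]; simp]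
      show f (g (HNNExtension.of _)) = HNNExtension.of _
      rw [hg_def, HNNExtension.lift_of]
      have hsplit : ((ofAdd ((k : ℤ) : ZMod n), ofAdd ((l : ℤ) : ZMod n)) : (Multiplicative (ZMod n) × Multiplicative (ZMod n)))
          = ((ofAdd ((k : ℤ) : ZMod n), 1) : (Multiplicative (ZMod n) × Multiplicative (ZMod n))) * ((1, ofAdd ((l : ℤ) : ZMod n)) : (Multiplicative (ZMod n) × Multiplicative (ZMod n))) := by
        simp [Prod.ext_iff]
      have hfA : f (T * X * T⁻¹)
          = HNNExtension.t * HNNExtension.of ((u, 1) : (Multiplicative (ZMod n) × Multiplicative (ZMod n))) * HNNExtension.t⁻¹ := by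
        rw [map_mul, map_mul, map_inv, hfX, hfT]
      rw [hsplit, map_mul, hψ1, hψ2, zmodHom_intCast, zmodHom_intCast, map_mul, map_zpow,
        map_zpow, hfX, hfA]
      rw [map_mul (HNNExtension.of (G := (Multiplicative (ZMod n) × Multiplicative (ZMod n))))]
      congr 1
      · rw [← map_zpow]
        congr 1
        rw [prod_zpow]
        simp [hu_def, ofAdd_one_zpow]
      · have h2 : (HNNExtension.t * HNNExtension.of ((u, 1) : (Multiplicative (ZMod n) × Multiplicative (ZMod n))) * HNNExtension.t⁻¹ : HNN) ^ l
            = HNNExtension.of ((1, u) : (Multiplicative (ZMod n) × Multiplicative (ZMod n))) ^ l := by rw [hconjHNN]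
        rw [h2, ← map_zpow]
        congr 1
        rw [prod_zpow]
        simp [hu_def, ofAdd_one_zpow]
    · show f (g HNNExtension.t) = HNNExtension.t
      rw [hg_def, HNNExtension.lift_t, hfT]
  exact ⟨MonoidHom.toMulEquiv f g hgf hfg⟩
end

section
/- Let n ≥ 1, let q_n = (n+1)^n − 1 and c_n = n·q_n. In the one-relator presented group ⟨x, t | ρ_n(x,t)⟩, the commutator [(t x t⁻¹)^n, x^n] equals x^{c_n}. -/
open scoped commutatorElement

/-- In the one-relator presented group `⟨x, t | ρ_n(x,t)⟩` (with `n ≥ 1`),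
setting `q_n = (n+1)^n - 1` and `c_n = n * q_n`, the commutator
`[(t x t⁻¹)^n, x^n]` equals `x^{c_n}`. -/
theorem commutator_eq_pow_c (n : ℕ) (hn : 1 ≤ n)
    (X T : PresentedGroup ({rhoWord n (FreeGroup.of 0) (FreeGroup.of 1)} :
      Set (FreeGroup (Fin 2))))
    (hX : X = PresentedGroup.of 0) (hT : T = PresentedGroup.of 1) :
    ⁅(T * X * T⁻¹) ^ n, X ^ n⁆ = X ^ (n * ((n + 1) ^ n - 1)) := by
  let rels : Set (FreeGroup (Fin 2)) :=
    ({rhoWord n (FreeGroup.of 0) (FreeGroup.of 1)} : Set (FreeGroup (Fin 2)))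
  let φ : FreeGroup (Fin 2) →* PresentedGroup rels :=
    QuotientGroup.mk' (Subgroup.normalClosure rels)
  have hrel : φ (rhoWord n (FreeGroup.of 0) (FreeGroup.of 1)) = 1 :=
    (QuotientGroup.eq_one_iff _).mpr (Subgroup.subset_normalClosure rfl)
  have hφX : φ (FreeGroup.of 0) = X := by rw [hX]; rfl
  have hφT : φ (FreeGroup.of 1) = T := by rw [hT]; rfl
  have h0 : rhoWord n X T = 1 := by
    rw [← hφX, ← hφT]
    rw [show rhoWord n (φ (FreeGroup.of 0)) (φ (FreeGroup.of 1))
        = φ (rhoWord n (FreeGroup.of 0) (FreeGroup.of 1)) by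
      simp [rhoWord, map_mul, map_inv, map_zpow]]
    exact hrel
  set y := T * X * T⁻¹ with hy
  have h1 : y * X * y⁻¹ = X ^ (n + 1) := by
    change T * X * T⁻¹ * X * (T * X * T⁻¹)⁻¹ * X ^ (-((n : ℤ) + 1)) = 1 at h0
    have := mul_eq_one_iff_eq_inv.mp h0
    rw [← zpow_neg, neg_neg, ← hy] at this
    rw [this, ← zpow_natCast X (n + 1)]
    push_cast
    ring_nf
  have key : ∀ k : ℕ, y ^ k * X * (y ^ k)⁻¹ = X ^ ((n + 1) ^ k) := by
    intro k
    induction k with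
    | zero => simp
    | succ k ih =>
      have e1 : y ^ (k + 1) * X * (y ^ (k + 1))⁻¹
          = y * (y ^ k * X * (y ^ k)⁻¹) * y⁻¹ := by group
      rw [e1, ih, ← conj_pow, h1, ← pow_mul, pow_succ, Nat.mul_comm]
  have h2 : 1 ≤ (n + 1) ^ n := Nat.one_le_pow _ _ (by omega)
  have harith : n * ((n + 1) ^ n - 1) + n = (n + 1) ^ n * n := by
    obtain ⟨m, hm⟩ := Nat.exists_eq_add_of_le h2
    rw [hm, Nat.add_sub_cancel_left]
    ring
  have main : y ^ n * X ^ n * (y ^ n)⁻¹ = X ^ ((n + 1) ^ n * n) := by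
    rw [← conj_pow, key n, ← pow_mul]
  rw [commutatorElement_def]
  rw [main, ← harith, pow_add]
  group
end

section
/- Let n ≥ 1, let q_n = (n+1)^n − 1 and c_n = n·q_n. Let F be the free group on two generators x, t, and let R be the normal closure in F of {ρ_n(x,t), x^n}. Then x^{c_n} lies in the join (inside F) of the normal closure of {ρ_n(x,t)} and the commutator subgroup [R, R]. -/
lemma conj_pow_eq_pow {G : Type*} [Group G] (A X : G) (m : ℕ)
    (h : A * X * A⁻¹ = X ^ m) (k : ℕ) :
    A ^ k * X * (A ^ k)⁻¹ = X ^ m ^ k := by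
  induction k with
  | zero => simp
  | succ k ih =>
    have h1 : A ^ (k + 1) * X * (A ^ (k + 1))⁻¹
        = A * (A ^ k * X * (A ^ k)⁻¹) * A⁻¹ := by
      rw [pow_succ']; group
    rw [h1, ih, ← conj_pow, h, ← pow_mul, ← pow_succ']

open scoped commutatorElement

/-- Let `n ≥ 1`, `q_n = (n+1)^n - 1`, `c_n = n * q_n`.  Let `F` be the free
group on two generators `x, t` and `R` the normal closure of `{ρ_n(x,t), x^n}` in `F`.
Then `x^{c_n}` lies in the join of the normal closure of `{ρ_n(x,t)}` and the commutator
subgroup `[R, R]` (taken inside `F`). -/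
theorem pow_c_mem_join (n : ℕ) (hn : 1 ≤ n)
    (x t : FreeGroup (Fin 2)) (hx : x = FreeGroup.of 0) (ht : t = FreeGroup.of 1)
    (R : Subgroup (FreeGroup (Fin 2)))
    (hR : R = Subgroup.normalClosure {rhoWord n x t, x ^ n}) :
    x ^ (n * ((n + 1) ^ n - 1)) ∈
      Subgroup.normalClosure {rhoWord n x t} ⊔ ⁅R, R⁆ := by
  clear hx ht
  set N : Subgroup (FreeGroup (Fin 2)) := Subgroup.normalClosure {rhoWord n x t} with hN
  haveI : N.Normal := Subgroup.normalClosure_normal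
  set a : FreeGroup (Fin 2) := t * x * t⁻¹ with ha
  -- work in the quotient F ⧸ N
  let π : FreeGroup (Fin 2) →* FreeGroup (Fin 2) ⧸ N := QuotientGroup.mk' N
  have hρN : rhoWord n x t ∈ N :=
    Subgroup.subset_normalClosure (Set.mem_singleton _)
  have hρ : π (rhoWord n x t) = 1 := (QuotientGroup.eq_one_iff _).mpr hρN
  have h1 : π a * π x * (π a)⁻¹ = (π x) ^ (n + 1) := by
    have : π a * π x * (π a)⁻¹ * (π x) ^ (-((n : ℤ) + 1)) = 1 := by
      have := hρ
      simp only [rhoWord, map_mul, map_inv, map_zpow] at this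
      simpa [ha] using this
    have h2 : π a * π x * (π a)⁻¹ = (π x) ^ ((n : ℤ) + 1) := by
      have := mul_eq_one_iff_eq_inv.mp this
      rw [this, ← zpow_neg, neg_neg]
    rw [h2]
    norm_cast
  have key : (π a) ^ n * (π x) ^ n * ((π a) ^ n)⁻¹ = (π x) ^ (n * (n + 1) ^ n) := by
    have h3 := conj_pow_eq_pow (π a) (π x) (n + 1) h1 n
    calc (π a) ^ n * (π x) ^ n * ((π a) ^ n)⁻¹
        = ((π a) ^ n * π x * ((π a) ^ n)⁻¹) ^ n := by rw [conj_pow]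
      _ = ((π x) ^ (n + 1) ^ n) ^ n := by rw [h3]
      _ = (π x) ^ (n * (n + 1) ^ n) := by rw [← pow_mul, mul_comm]
  -- the element of N
  set w : FreeGroup (Fin 2) := x ^ (n * (n + 1) ^ n) * a ^ n * (x ^ n)⁻¹ * (a ^ n)⁻¹ with hw
  have hwN : w ∈ N := by
    refine (QuotientGroup.eq_one_iff w).mp ?_
    show π w = 1
    have : π w = π x ^ (n * (n + 1) ^ n) *
        ((π a) ^ n * (π x) ^ n * ((π a) ^ n)⁻¹)⁻¹ := by
      simp only [hw, map_mul, map_pow, map_inv]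
      group
    rw [this, key, mul_inv_cancel]
  -- the commutator
  have hxnR : x ^ n ∈ R := by
    rw [hR]
    exact Subgroup.subset_normalClosure (Set.mem_insert_iff.mpr (Or.inr (Set.mem_singleton _)))
  haveI hRnormal : R.Normal := by rw [hR]; exact Subgroup.normalClosure_normal
  have hanR : a ^ n ∈ R := by
    have : a ^ n = t * x ^ n * t⁻¹ := by rw [ha, conj_pow]
    rw [this]
    exact hRnormal.conj_mem _ hxnR t
  have hcomm : ⁅a ^ n, x ^ n⁆ ∈ ⁅R, R⁆ :=
    Subgroup.commutator_mem_commutator hanR hxnR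
  -- the identity
  have hM : n * (n + 1) ^ n = n * ((n + 1) ^ n - 1) + n := by
    have h1 : 1 ≤ (n + 1) ^ n := Nat.one_le_pow _ _ (Nat.succ_pos n)
    obtain ⟨m, hm⟩ : ∃ m, (n + 1) ^ n = m + 1 := ⟨(n + 1) ^ n - 1, by omega⟩
    rw [hm]; simp [Nat.mul_succ]
  have heq : x ^ (n * ((n + 1) ^ n - 1)) = w * ⁅a ^ n, x ^ n⁆ := by
    rw [commutatorElement_def, hw, hM, pow_add]
    group
  rw [heq]
  exact mul_mem (Subgroup.mem_sup_left hwN) (Subgroup.mem_sup_right hcomm)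
end

section
/- Let m, n ≥ 1 with gcd(q_m, q_n) = 1, where q_k = (k+1)^k − 1. Let F be the free group on four generators x_m, t_m, x_n, t_n, and let R be the normal closure in F of {ρ_m(x_m,t_m), ρ_n(x_n,t_n), x_m^m, x_n^n}. Then R equals the join (inside F) of the normal closure of the three elements {ρ_m(x_m,t_m), ρ_n(x_n,t_n), x_m^m x_n^n} and the commutator subgroup [R, R]. (Equivalently, the relation module of the presentation ⟨x_m, t_m, x_n, t_n | ρ_m, ρ_n, x_m^m, x_n^n⟩ of Γ_{m,n} = Q_m ∗ Q_n is generated as a module by the images of ρ_m, ρ_n and x_m^m x_n^n.) -/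
/-- `q_k = (k+1)^k - 1`. -/
def q (k : ℕ) : ℕ := (k + 1) ^ k - 1

/-- If `W X W⁻¹ = X^{m+1}` and `W^m` commutes with `X^m`, then `(X^m)^{q_m} = 1`. -/
lemma pow_q_eq_one {G : Type*} [Group G] (m : ℕ) (X W : G)
    (hρ : W * X * W⁻¹ * X ^ (-(m + 1 : ℤ)) = 1)
    (hcomm : W ^ m * X ^ m = X ^ m * W ^ m) :
    (X ^ m) ^ q m = 1 := by
  have hWX : W * X * W⁻¹ = X ^ (m + 1) := by
    have h1 : W * X * W⁻¹ = (X ^ (-(m + 1 : ℤ)))⁻¹ := by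
      rw [eq_inv_iff_mul_eq_one]; exact hρ
    rw [h1, ← zpow_neg, neg_neg]
    norm_cast
  have hconj : ∀ j : ℕ, W * X ^ j * W⁻¹ = X ^ ((m + 1) * j) := by
    intro j
    rw [← conj_pow, hWX, ← pow_mul]
  have hiter : ∀ k : ℕ, W ^ k * X ^ m * (W ^ k)⁻¹ = X ^ (m * (m + 1) ^ k) := by
    intro k
    induction k with
    | zero => simp
    | succ k ih =>
      have : W ^ (k + 1) * X ^ m * (W ^ (k + 1))⁻¹
          = W * (W ^ k * X ^ m * (W ^ k)⁻¹) * W⁻¹ := by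
        rw [pow_succ']
        group
      rw [this, ih, hconj]
      congr 1
      ring
  have hm' : W ^ m * X ^ m * (W ^ m)⁻¹ = X ^ m := by
    rw [hcomm]; group
  have hkey : X ^ (m * (m + 1) ^ m) = X ^ m := by
    rw [← hiter m, hm']
  have harith : m * q m + m = m * (m + 1) ^ m := by
    unfold q
    rw [Nat.mul_sub, Nat.mul_one, Nat.sub_add_cancel (Nat.le_mul_of_pos_right m (by positivity))]
  have hmul : X ^ (m * q m) * X ^ m = 1 * X ^ m := by
    rw [← pow_add, harith, hkey, one_mul]
  have hfin : X ^ (m * q m) = 1 := mul_right_cancel hmul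
  rw [pow_mul] at hfin
  exact hfin

open scoped commutatorElement

/-- Let `m, n ≥ 1` with `gcd(q_m, q_n) = 1`.  In the free group `F` on the
four generators `x_m, t_m, x_n, t_n`, let `R` be the normal closure of
`{ρ_m(x_m,t_m), ρ_n(x_n,t_n), x_m^m, x_n^n}`.  Then `R` equals the join of the normal
closure of the three elements `{ρ_m(x_m,t_m), ρ_n(x_n,t_n), x_m^m * x_n^n}` and the
commutator subgroup `[R, R]`.  (Equivalently, the relation module of the presentation
`⟨x_m, t_m, x_n, t_n | ρ_m, ρ_n, x_m^m, x_n^n⟩` of `Γ_{m,n} = Q_m ∗ Q_n` is generated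
by the images of `ρ_m`, `ρ_n` and `x_m^m x_n^n`.) -/
theorem relationModule_three_generators (m n : ℕ) (hm : 1 ≤ m) (hn : 1 ≤ n)
    (hq : Nat.gcd (q m) (q n) = 1)
    (xm tm xn tn : FreeGroup (Fin 4))
    (hxm : xm = FreeGroup.of 0) (htm : tm = FreeGroup.of 1)
    (hxn : xn = FreeGroup.of 2) (htn : tn = FreeGroup.of 3)
    (R : Subgroup (FreeGroup (Fin 4)))
    (hR : R = Subgroup.normalClosure {rhoWord m xm tm, rhoWord n xn tn, xm ^ m, xn ^ n}) :
    R = Subgroup.normalClosure {rhoWord m xm tm, rhoWord n xn tn, xm ^ m * xn ^ n} ⊔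
      ⁅R, R⁆ := by
  have hRn : R.Normal := by rw [hR]; infer_instance
  haveI := hRn
  set S : Subgroup (FreeGroup (Fin 4)) :=
    Subgroup.normalClosure {rhoWord m xm tm, rhoWord n xn tn, xm ^ m * xn ^ n} with hS
  set T : Subgroup (FreeGroup (Fin 4)) := S ⊔ ⁅R, R⁆ with hT
  haveI hTn : T.Normal := by rw [hT]; infer_instance
  -- generators of R are in R
  have hρmR : rhoWord m xm tm ∈ R := by
    rw [hR]; exact Subgroup.subset_normalClosure (by simp)
  have hρnR : rhoWord n xn tn ∈ R := by
    rw [hR]; exact Subgroup.subset_normalClosure (by simp)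
  have haR : xm ^ m ∈ R := by
    rw [hR]; exact Subgroup.subset_normalClosure (by simp)
  have hbR : xn ^ n ∈ R := by
    rw [hR]; exact Subgroup.subset_normalClosure (by simp)
  -- the three elements are in T
  have hρmT : rhoWord m xm tm ∈ T := le_sup_left (α := Subgroup (FreeGroup (Fin 4)))
    (Subgroup.subset_normalClosure (by simp))
  have hρnT : rhoWord n xn tn ∈ T := le_sup_left (α := Subgroup (FreeGroup (Fin 4)))
    (Subgroup.subset_normalClosure (by simp))
  have habT : xm ^ m * xn ^ n ∈ T := le_sup_left (α := Subgroup (FreeGroup (Fin 4)))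
    (Subgroup.subset_normalClosure (by simp))
  -- the quotient map
  let π : FreeGroup (Fin 4) →* FreeGroup (Fin 4) ⧸ T := QuotientGroup.mk' T
  have hπ1 : ∀ g : FreeGroup (Fin 4), g ∈ T → π g = 1 := fun g hg => (QuotientGroup.eq_one_iff g).2 hg
  have hcommT : ∀ g h : FreeGroup (Fin 4), g ∈ R → h ∈ R → π g * π h = π h * π g := by
    intro g h hg hh
    have h1 : ⁅g, h⁆ ∈ T := le_sup_right (α := Subgroup (FreeGroup (Fin 4)))
      (Subgroup.commutator_mem_commutator hg hh)
    have h2 : ⁅π g, π h⁆ = 1 := by rw [← map_commutatorElement]; exact hπ1 _ h1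
    exact commutatorElement_eq_one_iff_mul_comm.1 h2
  -- x^m has image killed by q m
  have key : ∀ (k : ℕ) (x t : FreeGroup (Fin 4)), 1 ≤ k → rhoWord k x t ∈ T → x ^ k ∈ R →
      (π (x ^ k)) ^ q k = 1 := by
    intro k x t hk hρT hxR
    have hρ1 : π (rhoWord k x t) = 1 := hπ1 _ hρT
    have hρ1' : π (t * x * t⁻¹) * π x * (π (t * x * t⁻¹))⁻¹ * (π x) ^ (-(k + 1 : ℤ)) = 1 := by
      have := hρ1
      simp only [rhoWord, map_mul, map_inv, map_zpow] at this
      simpa [map_mul, map_inv] using this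
    have hwk : (t * x * t⁻¹) ^ k = t * x ^ k * t⁻¹ := conj_pow
    have hwkR : (t * x * t⁻¹) ^ k ∈ R := by
      rw [hwk]; exact hRn.conj_mem _ hxR t
    have hcomm : (π (t * x * t⁻¹)) ^ k * (π x) ^ k = (π x) ^ k * (π (t * x * t⁻¹)) ^ k := by
      have := hcommT ((t * x * t⁻¹) ^ k) (x ^ k) hwkR hxR
      simpa [map_pow] using this
    have := pow_q_eq_one k (π x) (π (t * x * t⁻¹)) hρ1' hcomm
    simpa [map_pow] using this
  have hAq : (π (xm ^ m)) ^ q m = 1 := key m xm tm hm hρmT haR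
  have hBq : (π (xn ^ n)) ^ q n = 1 := key n xn tn hn hρnT hbR
  have hAB : π (xm ^ m) * π (xn ^ n) = 1 := by
    rw [← map_mul]; exact hπ1 _ habT
  have hBinv : π (xn ^ n) = (π (xm ^ m))⁻¹ := eq_inv_of_mul_eq_one_right hAB
  have hAqn : (π (xm ^ m)) ^ q n = 1 := by
    have : ((π (xm ^ m))⁻¹) ^ q n = 1 := by rw [← hBinv]; exact hBq
    rw [inv_pow, inv_eq_one] at this
    exact this
  have hA1 : π (xm ^ m) = 1 := by
    have hd : orderOf (π (xm ^ m)) ∣ Nat.gcd (q m) (q n) :=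
      Nat.dvd_gcd (orderOf_dvd_of_pow_eq_one hAq) (orderOf_dvd_of_pow_eq_one hAqn)
    rw [hq, Nat.dvd_one] at hd
    exact orderOf_eq_one_iff.1 hd
  have hB1 : π (xn ^ n) = 1 := by rw [hBinv, hA1, inv_one]
  have haT : xm ^ m ∈ T := (QuotientGroup.eq_one_iff _).1 hA1
  have hbT : xn ^ n ∈ T := (QuotientGroup.eq_one_iff _).1 hB1
  apply le_antisymm
  · rw [hR]
    apply Subgroup.normalClosure_le_normal
    intro g hg
    simp only [Set.mem_insert_iff, Set.mem_singleton_iff] at hg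
    rcases hg with rfl | rfl | rfl | rfl
    · exact hρmT
    · exact hρnT
    · exact haT
    · exact hbT
  · apply sup_le
    · apply Subgroup.normalClosure_le_normal
      intro g hg
      simp only [Set.mem_insert_iff, Set.mem_singleton_iff] at hg
      rcases hg with rfl | rfl | rfl
      · exact hρmR
      · exact hρnR
      · exact R.mul_mem haR hbR
    · rw [Subgroup.commutator_le]
      intro g hg h hh
      exact R.mul_mem (R.mul_mem (R.mul_mem hg hh) (R.inv_mem hg)) (R.inv_mem hh)
end

section
/- Let r ≥ 1 and let m_1, …, m_r ≥ 1 satisfy gcd(q_{m_i}, q_{m_j}) = 1 for all 1 ≤ i < j ≤ r, where q_k = (k+1)^k − 1. Let F be the free group on 2r generators x_{m_1}, t_{m_1}, …, x_{m_r}, t_{m_r}, and let R be the normal closure in F of {ρ_{m_1}(x_{m_1},t_{m_1}), x_{m_1}^{m_1}, …, ρ_{m_r}(x_{m_r},t_{m_r}), x_{m_r}^{m_r}}. Then R equals the join (inside F) of the normal closure of the r+1 elements {ρ_{m_1}(x_{m_1},t_{m_1}), …, ρ_{m_r}(x_{m_r},t_{m_r}), x_{m_1}^{m_1} x_{m_2}^{m_2}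 ⋯ x_{m_r}^{m_r}} and the commutator subgroup [R, R]. -/
open scoped commutatorElement IsMulCommutative

private lemma key_pow {G : Type*} [Group G] (k : ℕ) (X T : G)
    (hρ : rhoWord k X T = 1)
    (hcomm : Commute (T * X ^ k * T⁻¹) (X ^ k)) :
    (X ^ k) ^ q k = 1 := by
  set c := T * X * T⁻¹ with hc
  have hconj : c * X * c⁻¹ = X ^ (k + 1) := by
    have h : c * X * c⁻¹ * X ^ (-(k + 1 : ℤ)) = 1 := hρ
    have h2 : c * X * c⁻¹ = (X ^ (-(k + 1 : ℤ)))⁻¹ := by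
      rw [eq_inv_iff_mul_eq_one]; exact h
    rw [h2]
    rw [← zpow_neg, neg_neg]
    norm_cast
  have hpow : ∀ j n : ℕ, c ^ j * X ^ n * (c ^ j)⁻¹ = X ^ (n * (k + 1) ^ j) := by
    intro j
    induction j with
    | zero => intro n; simp
    | succ j ih =>
      intro n
      have : c ^ (j + 1) * X ^ n * (c ^ (j + 1))⁻¹
          = c * (c ^ j * X ^ n * (c ^ j)⁻¹) * c⁻¹ := by
        rw [pow_succ']; group
      rw [this, ih n]
      have : c * X ^ (n * (k + 1) ^ j) * c⁻¹ = (c * X * c⁻¹) ^ (n * (k + 1) ^ j) := by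
        rw [conj_pow]
      rw [this, hconj, ← pow_mul]
      ring_nf
  have hTXk : T * X ^ k * T⁻¹ = c ^ k := by rw [hc, conj_pow]
  have hck : c ^ k * X ^ k * (c ^ k)⁻¹ = X ^ k := by
    rw [← hTXk]
    rw [hcomm.eq]
    group
  have hkey : X ^ (k * (k + 1) ^ k) = X ^ k := by rw [← hpow k k, hck]
  -- now deduce (X^k)^q k = 1
  have hM : 1 ≤ (k + 1) ^ k := Nat.one_le_pow _ _ (Nat.succ_pos k)
  have hsplit : k * (k + 1) ^ k = k + k * ((k + 1) ^ k - 1) := by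
    have h := Nat.sub_add_cancel hM
    nth_rewrite 1 [← h]
    ring
  have : X ^ k * X ^ (k * ((k + 1) ^ k - 1)) = X ^ k := by
    rw [← pow_add, ← hsplit, hkey]
  have h1 : X ^ (k * ((k + 1) ^ k - 1)) = 1 := by
    have h2 : X ^ k * X ^ (k * ((k + 1) ^ k - 1)) = X ^ k * 1 := by
      rw [mul_one]; exact this
    exact mul_left_cancel h2
  rw [q, ← pow_mul]
  exact h1

private lemma mem_of_relations {G : Type*} [Group G] (r : ℕ) (m : Fin r → ℕ)
    (hq : ∀ i j, i ≠ j → Nat.gcd (q (m i)) (q (m j)) = 1)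
    (x t : Fin r → G) (R N : Subgroup G) [hN : N.Normal] (hRnorm : R.Normal)
    (hRN : ∀ u v : G, u ∈ R → v ∈ R → ⁅u, v⁆ ∈ N)
    (hxR : ∀ j, (x j) ^ (m j) ∈ R)
    (hρ : ∀ j, rhoWord (m j) (x j) (t j) ∈ N)
    (hP : ((List.finRange r).map fun j => (x j) ^ (m j)).prod ∈ N)
    (i : Fin r) : (x i) ^ (m i) ∈ N := by
  classical
  let φ : G →* G ⧸ N := QuotientGroup.mk' N
  -- step 1: the q-th power of each image vanishes
  have step1 : ∀ j, (φ ((x j) ^ (m j))) ^ q (m j) = 1 := by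
    intro j
    have hρ' : rhoWord (m j) (φ (x j)) (φ (t j)) = 1 := by
      have : φ (rhoWord (m j) (x j) (t j)) = 1 :=
        (QuotientGroup.eq_one_iff _).mpr (hρ j)
      rw [rhoWord] at this ⊢
      simpa [map_mul, map_inv, map_zpow] using this
    have hu : t j * (x j) ^ (m j) * (t j)⁻¹ ∈ R := hRnorm.conj_mem _ (hxR j) _
    have hcomm : Commute (φ (t j) * φ (x j) ^ (m j) * (φ (t j))⁻¹) (φ (x j) ^ (m j)) := by
      have h1 : φ ⁅t j * (x j) ^ (m j) * (t j)⁻¹, (x j) ^ (m j)⁆ = 1 :=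
        (QuotientGroup.eq_one_iff _).mpr (hRN _ _ hu (hxR j))
      rw [map_commutatorElement] at h1
      have := commutatorElement_eq_one_iff_commute.mp h1
      simpa [map_mul, map_inv, map_pow] using this
    have := key_pow (m j) (φ (x j)) (φ (t j)) hρ' hcomm
    simpa [map_pow] using this
  -- the image of R in the quotient is commutative
  let H : Subgroup (G ⧸ N) := R.map φ
  haveI hHc : IsMulCommutative H := by
    constructor
    constructor
    rintro ⟨a, ha⟩ ⟨b, hb⟩
    obtain ⟨u, hu, rfl⟩ := ha
    obtain ⟨v, hv, rfl⟩ := hb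
    have h1 : φ ⁅u, v⁆ = 1 := (QuotientGroup.eq_one_iff _).mpr (hRN _ _ hu hv)
    rw [map_commutatorElement] at h1
    have := (commutatorElement_eq_one_iff_commute.mp h1).eq
    exact Subtype.ext this
  let b : Fin r → H := fun j => ⟨φ ((x j) ^ (m j)), ⟨_, hxR j, rfl⟩⟩
  have hbq : ∀ j, b j ^ q (m j) = 1 := by
    intro j
    apply Subtype.ext
    simpa [b] using step1 j
  have hbprod : ∏ j, b j = 1 := by
    apply Subtype.ext
    have h1 : ((∏ j, b j : H) : G ⧸ N) = ((List.finRange r).map fun j => φ ((x j) ^ (m j))).prod := by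
      rw [Fin.prod_univ_def]
      show H.subtype (List.map b (List.finRange r)).prod = _
      rw [map_list_prod, List.map_map]
      rfl
    have h2 : φ (((List.finRange r).map fun j => (x j) ^ (m j)).prod) = 1 :=
      (QuotientGroup.eq_one_iff _).mpr hP
    rw [map_list_prod, List.map_map] at h2
    rw [h1]
    exact h2
  -- conclude b i = 1
  set Qv := ∏ j ∈ Finset.univ.erase i, q (m j) with hQv
  have h1 : b i ^ Qv = 1 := by
    have hall : ∀ j ∈ Finset.univ.erase i, b j ^ Qv = 1 := by
      intro j hj
      obtain ⟨c, hc⟩ := Finset.dvd_prod_of_mem (fun j => q (m j)) hj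
      rw [hQv, hc, pow_mul, hbq, one_pow]
    have : (∏ j, b j) ^ Qv = b i ^ Qv * ∏ j ∈ Finset.univ.erase i, b j ^ Qv := by
      rw [← Finset.prod_pow]
      rw [← Finset.mul_prod_erase Finset.univ _ (Finset.mem_univ i)]
    rw [hbprod, one_pow, Finset.prod_eq_one hall, mul_one] at this
    exact this.symm
  have h2 : Nat.Coprime (q (m i)) Qv :=
    Nat.Coprime.prod_right fun j hj => hq i j (Ne.symm (Finset.ne_of_mem_erase hj))
  have h3 : b i = 1 := by
    have h4 := pow_gcd_eq_one.mpr ⟨hbq i, h1⟩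
    rwa [Nat.Coprime.gcd_eq_one h2, pow_one] at h4
  have h5 : φ ((x i) ^ (m i)) = 1 := congrArg Subtype.val h3
  exact (QuotientGroup.eq_one_iff _).mp h5

/-- Let `r ≥ 1` and `m_1, …, m_r ≥ 1` with `gcd(q_{m_i}, q_{m_j}) = 1` for
`i ≠ j`.  In the free group `F` on `2r` generators `x_1, t_1, …, x_r, t_r` (here the
generator indexed by `(i, false)` is `x_i` and the one indexed by `(i, true)` is `t_i`),
let `R` be the normal closure of `{ρ_{m_i}(x_i,t_i), x_i^{m_i} : 1 ≤ i ≤ r}`.  Then `R`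
equals the join of the normal closure of the `r + 1` elements
`{ρ_{m_1}(x_1,t_1), …, ρ_{m_r}(x_r,t_r), x_1^{m_1} x_2^{m_2} ⋯ x_r^{m_r}}` and the
commutator subgroup `[R, R]`. -/
theorem relationModule_r_plus_one_generators (r : ℕ) (hr : 1 ≤ r)
    (m : Fin r → ℕ) (hm : ∀ i, 1 ≤ m i)
    (hq : ∀ i j, i ≠ j → Nat.gcd (q (m i)) (q (m j)) = 1)
    (x t : Fin r → FreeGroup (Fin r × Bool))
    (hx : ∀ i, x i = FreeGroup.of (i, false)) (ht : ∀ i, t i = FreeGroup.of (i, true))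
    (R : Subgroup (FreeGroup (Fin r × Bool)))
    (hR : R = Subgroup.normalClosure
      ((Set.range fun i => rhoWord (m i) (x i) (t i)) ∪
        (Set.range fun i => (x i) ^ (m i)))) :
    R = Subgroup.normalClosure
        ((Set.range fun i => rhoWord (m i) (x i) (t i)) ∪
          {((List.finRange r).map fun i => (x i) ^ (m i)).prod}) ⊔ ⁅R, R⁆ := by
  have hRnorm : R.Normal := by rw [hR]; infer_instance
  haveI := hRnorm
  set N := Subgroup.normalClosure
        ((Set.range fun i => rhoWord (m i) (x i) (t i)) ∪
          {((List.finRange r).map fun i => (x i) ^ (m i)).prod}) ⊔ ⁅R, R⁆ with hNdef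
  haveI hNnorm : N.Normal := Subgroup.sup_normal _ _
  -- basic memberships in R
  have hxR : ∀ j, (x j) ^ (m j) ∈ R := by
    intro j
    rw [hR]
    exact Subgroup.subset_normalClosure (Or.inr ⟨j, rfl⟩)
  have hρR : ∀ j, rhoWord (m j) (x j) (t j) ∈ R := by
    intro j
    rw [hR]
    exact Subgroup.subset_normalClosure (Or.inl ⟨j, rfl⟩)
  -- memberships in N
  have hρN : ∀ j, rhoWord (m j) (x j) (t j) ∈ N :=
    fun j => Subgroup.mem_sup_left (Subgroup.subset_normalClosure (Or.inl ⟨j, rfl⟩))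
  have hPN : ((List.finRange r).map fun j => (x j) ^ (m j)).prod ∈ N :=
    Subgroup.mem_sup_left (Subgroup.subset_normalClosure (Or.inr rfl))
  have hRN : ∀ u v : FreeGroup (Fin r × Bool), u ∈ R → v ∈ R → ⁅u, v⁆ ∈ N :=
    fun u v hu hv => Subgroup.mem_sup_right (Subgroup.commutator_mem_commutator hu hv)
  apply le_antisymm
  · rw [hR]
    apply Subgroup.normalClosure_le_normal
    rintro _ (⟨j, rfl⟩ | ⟨j, rfl⟩)
    · exact hρN j
    · exact mem_of_relations r m hq x t R N hRnorm hRN hxR hρN hPN j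
  · apply sup_le
    · apply Subgroup.normalClosure_le_normal
      rintro _ (⟨j, rfl⟩ | rfl)
      · exact hρR j
      · apply Subgroup.list_prod_mem
        intro y hy
        obtain ⟨j, _, rfl⟩ := List.mem_map.mp hy
        exact hxR j
    · exact Subgroup.commutator_le_left R R
end

section
/- Let n ≥ 1. In the presented group Q_n = ⟨x, t | ρ_n(x,t), x^n⟩, the image of the generator x has order exactly n. -/
/-- In the presented group `Q_n = ⟨x, t | ρ_n(x,t), x^n⟩` (with `n ≥ 1`),
the image of the generator `x` has order exactly `n`. -/
theorem orderOf_x_eq (n : ℕ) (hn : 1 ≤ n) :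
    orderOf (PresentedGroup.of 0 :
      PresentedGroup ({rhoWord n (FreeGroup.of 0) (FreeGroup.of 1),
        FreeGroup.of 0 ^ n} : Set (FreeGroup (Fin 2)))) = n := by
  set rels : Set (FreeGroup (Fin 2)) :=
    {rhoWord n (FreeGroup.of 0) (FreeGroup.of 1), FreeGroup.of 0 ^ n} with hrels
  have hNeZero : NeZero n := ⟨by omega⟩
  -- the map to Multiplicative (ZMod n)
  set f : Fin 2 → Multiplicative (ZMod n) :=
    fun i => if i = 0 then Multiplicative.ofAdd (1 : ZMod n) else 1 with hf
  have hlift : ∀ r ∈ rels, FreeGroup.lift f r = 1 := by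
    intro r hr
    rcases hr with hr | hr
    · subst hr
      simp only [rhoWord, map_mul, map_inv, map_zpow, FreeGroup.lift_apply_of, hf]
      simp only [show ((0:Fin 2)=0)=True from by simp, show ((1:Fin 2)=0)=False from by simp, if_true, if_false]
      have h1 : (Multiplicative.ofAdd (1 : ZMod n)) ^ (n : ℤ) = 1 := by
        rw [← ofAdd_zsmul]
        simp [ZMod.natCast_self]
      group
      rw [zpow_neg, h1]
      group
    · simp only [Set.mem_singleton_iff] at hr
      subst hr
      simp only [map_pow, FreeGroup.lift_apply_of, hf, if_true, show ((0:Fin 2)=0)=True from by simp]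
      rw [← ofAdd_nsmul]
      simp [ZMod.natCast_self]
  set φ := PresentedGroup.toGroup hlift
  have hφx : φ (PresentedGroup.of 0) = Multiplicative.ofAdd (1 : ZMod n) := by
    rw [PresentedGroup.toGroup.of hlift]
    simp [hf]
  have hxn : (PresentedGroup.of 0 : PresentedGroup rels) ^ n = 1 := by
    have : ((PresentedGroup.mk rels) (FreeGroup.of 0 ^ n) : PresentedGroup rels) = 1 := by
      have hmem : (FreeGroup.of 0 ^ n : FreeGroup (Fin 2)) ∈
          Subgroup.normalClosure rels :=
        Subgroup.subset_normalClosure (by right; rfl)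
      exact (QuotientGroup.eq_one_iff _).mpr hmem
    rw [map_pow] at this
    exact this
  have h1 : orderOf (PresentedGroup.of 0 : PresentedGroup rels) ∣ n :=
    orderOf_dvd_of_pow_eq_one hxn
  have h2 : n ∣ orderOf (PresentedGroup.of 0 : PresentedGroup rels) := by
    have := orderOf_map_dvd φ (PresentedGroup.of 0 : PresentedGroup rels)
    rw [hφx] at this
    have horder : orderOf (Multiplicative.ofAdd (1 : ZMod n)) = n := by
      rw [orderOf_ofAdd_eq_addOrderOf, ZMod.addOrderOf_one]
    rwa [horder] at this
  exact Nat.dvd_antisymm h1 h2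
end

section
/- Let Γ be a group admitting a finite presentation with g generators and r relators. Then the minimal number of generators of the abelian group H₂(Γ; ℤ) (second group homology with trivial ℤ coefficients) is at most r − g + rk(H₁(Γ; ℤ)), where rk denotes the torsion-free rank of the abelianization of Γ (i.e. the dimension over ℚ of ℚ ⊗_ℤ Γ^{ab}). Equivalently, d(H₂(Γ)) − rk(H₁(Γ)) ≤ r − g. -/
open scoped TensorProduct

/-- The second homology group `H₂(Γ;ℤ)` of a group `Γ`, computed by Hopf's formula
`H₂(Γ;ℤ) ≅ (R ⊓ [F,F]) / [F,R]` from a presentation `Γ = F/R` of `Γ` as a quotient of a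
free group `F` by a normal subgroup `R` (here `R` is the kernel of the quotient map
`π : F → Γ`).  By Hopf's theorem this does not depend on the chosen presentation. -/
def hopfH2 {α : Type*} {Γ : Type*} [Group Γ] (π : FreeGroup α →* Γ) : Type _ :=
  (π.ker ⊓ commutator (FreeGroup α) : Subgroup (FreeGroup α)) ⧸
    ((⁅(⊤ : Subgroup (FreeGroup α)), π.ker⁆ : Subgroup (FreeGroup α)).subgroupOf
      (π.ker ⊓ commutator (FreeGroup α)))

noncomputable instance {α : Type*} {Γ : Type*} [Group Γ] (π : FreeGroup α →* Γ) :
    Group (hopfH2 π) :=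
  QuotientGroup.Quotient.group _

/-- The torsion-free rank `rk(H₁(Γ;ℤ))` of the abelianization of `Γ`, i.e.
`dim_ℚ (ℚ ⊗_ℤ Γ^{ab})`. -/
noncomputable def rkH1 (Γ : Type*) [Group Γ] : ℕ :=
  Module.finrank ℚ (ℚ ⊗[ℤ] (Additive (Abelianization Γ)))

open Module

open scoped commutatorElement

set_option linter.unusedSectionVars false


-- rank lemma
lemma finrank_rat_tensor (M : Type*) [AddCommGroup M] :
    Module.finrank ℚ (ℚ ⊗[ℤ] M) = Module.finrank ℤ M := by
  haveI : IsLocalizedModule (nonZeroDivisors ℤ) ((TensorProduct.mk ℤ ℚ M) 1) :=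
    (isLocalizedModule_iff_isBaseChange (nonZeroDivisors ℤ) ℚ _).mpr
      (TensorProduct.isBaseChange ℤ M ℚ)
  have h := IsLocalizedModule.rank_eq (p := nonZeroDivisors ℤ)
    (f := (TensorProduct.mk ℤ ℚ M) 1) (hp := le_rfl)
  have h1 := IsLocalization.rank_eq (S := ℚ) (p := nonZeroDivisors ℤ) (N := ℚ ⊗[ℤ] M)
    (hp := le_rfl)
  rw [Module.finrank, Module.finrank, h1, ← h]
  congr!

open Finsupp

/-- forward hom -/
noncomputable def abFreeFwd (α : Type*) :
    Additive (Abelianization (FreeGroup α)) →+ (α →₀ ℤ) :=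
  MonoidHom.toAdditiveLeft
    (Abelianization.lift (FreeGroup.lift fun a => Multiplicative.ofAdd (Finsupp.single a 1)))

noncomputable def abFreeBwd (α : Type*) :
    (α →₀ ℤ) →+ Additive (Abelianization (FreeGroup α)) :=
  Finsupp.liftAddHom fun a =>
    (zmultiplesHom _) (Additive.ofMul (Abelianization.of (FreeGroup.of a)))

@[simp] lemma abFreeFwd_of (α : Type*) (a : α) :
    abFreeFwd α (Additive.ofMul (Abelianization.of (FreeGroup.of a))) = Finsupp.single a 1 := by
  simp [abFreeFwd]

@[simp] lemma abFreeBwd_single (α : Type*) (a : α) (n : ℤ) :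
    abFreeBwd α (Finsupp.single a n)
      = n • Additive.ofMul (Abelianization.of (FreeGroup.of a)) := by
  simp [abFreeBwd]

noncomputable def abFreeEquiv (α : Type*) :
    Additive (Abelianization (FreeGroup α)) ≃+ (α →₀ ℤ) := by
  refine AddEquiv.mk' ⟨abFreeFwd α, abFreeBwd α, ?_, ?_⟩ (abFreeFwd α).map_add
  · -- left inverse
    have hc : MonoidHom.toAdditive.symm ((abFreeBwd α).comp (abFreeFwd α))
        = MonoidHom.id (Abelianization (FreeGroup α)) := by
      apply Abelianization.hom_ext
      apply FreeGroup.ext_hom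
      intro a
      show Additive.toMul (((abFreeBwd α).comp (abFreeFwd α))
        (Additive.ofMul (Abelianization.of (FreeGroup.of a)))) = _
      simp
    intro x
    have := DFunLike.congr_fun hc (Additive.toMul x)
    simpa using this
  · -- right inverse
    intro x
    induction x using Finsupp.induction with
    | zero => simp
    | single_add a b f _ _ ih => rw [map_add, map_add, ih]; simp

section QW

variable {G : Type*} [Group G] (R : Subgroup G) [R.Normal]

/-- `[F,R]` -/
abbrev hopfW : Subgroup G := ⁅(⊤ : Subgroup G), R⁆

/-- `R/[F,R]` -/
abbrev hopfQW := R ⧸ ((hopfW R).subgroupOf R)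

lemma hopfW_le : hopfW R ≤ R := Subgroup.commutator_le_right ⊤ R

lemma hopfW_le_commutator : hopfW R ≤ commutator G := by
  rw [commutator_def]
  exact Subgroup.commutator_mono le_rfl le_top

instance : CommGroup (hopfQW R) :=
  { (inferInstance : Group (hopfQW R)) with
    mul_comm := by
      intro a b
      refine QuotientGroup.induction_on a fun x => QuotientGroup.induction_on b fun y => ?_
      rw [← QuotientGroup.mk_mul, ← QuotientGroup.mk_mul, QuotientGroup.eq]
      refine Subgroup.mem_subgroupOf.mpr ?_
      have h : ((((x * y)⁻¹ * (y * x)) : R) : G) = ⁅(y : G)⁻¹, (x : G)⁻¹⁆ := by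
        rw [commutatorElement_def]
        push_cast
        group
      rw [h]
      exact Subgroup.commutator_mem_commutator (Subgroup.mem_top _) (R.inv_mem x.2) }

lemma hopfQW_closure_top {ι : Type*} (rel : ι → G) (hrel : ∀ i, rel i ∈ R)
    (hR : R ≤ Subgroup.normalClosure (Set.range rel)) :
    Subgroup.closure
      (Set.range fun i => (QuotientGroup.mk ⟨rel i, hrel i⟩ : hopfQW R)) = ⊤ := by
  set T : Set (hopfQW R) :=
    Set.range fun i => (QuotientGroup.mk ⟨rel i, hrel i⟩ : hopfQW R) with hT
  set H : Subgroup R :=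
    Subgroup.comap (QuotientGroup.mk' ((hopfW R).subgroupOf R)) (Subgroup.closure T) with hH
  have hmemH : ∀ x : R, x ∈ H ↔ (QuotientGroup.mk x : hopfQW R) ∈ Subgroup.closure T :=
    fun x => Iff.rfl
  set K : Subgroup G := Subgroup.map R.subtype H with hKdef
  haveI hKnormal : K.Normal := by
    constructor
    intro n hn gg
    rw [Subgroup.mem_map] at hn ⊢
    obtain ⟨y, hy, rfl⟩ := hn
    have hmem : gg * (y : G) * gg⁻¹ ∈ R := ‹R.Normal›.conj_mem _ y.2 gg
    have hzmem : ⁅gg, (y : G)⁆ ∈ hopfW R :=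
      Subgroup.commutator_mem_commutator (Subgroup.mem_top _) y.2
    have hzR : ⁅gg, (y : G)⁆ ∈ R := hopfW_le R hzmem
    refine ⟨⟨gg * (y : G) * gg⁻¹, hmem⟩, ?_, rfl⟩
    have heq : (⟨gg * (y : G) * gg⁻¹, hmem⟩ : R) = ⟨⁅gg, (y : G)⁆, hzR⟩ * y := by
      ext
      simp only [MulMemClass.coe_mul, commutatorElement_def]
      group
    refine (hmemH _).mpr ?_
    rw [heq, QuotientGroup.mk_mul]
    have h1 : (QuotientGroup.mk (⟨⁅gg, (y : G)⁆, hzR⟩ : R) : hopfQW R) = 1 := by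
      rw [QuotientGroup.eq_one_iff]
      exact Subgroup.mem_subgroupOf.mpr hzmem
    rw [h1, one_mul]
    exact (hmemH y).mp hy
  have hsub : Set.range rel ⊆ K := by
    rintro x ⟨i, rfl⟩
    exact ⟨⟨rel i, hrel i⟩, (hmemH _).mpr (Subgroup.subset_closure ⟨i, rfl⟩), rfl⟩
  have hRK : R ≤ K := hR.trans (Subgroup.normalClosure_le_normal hsub)
  rw [eq_top_iff]
  rintro q -
  refine QuotientGroup.induction_on q fun x => ?_
  obtain ⟨y, hy, hyx⟩ := Subgroup.mem_map.mp (hRK x.2)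
  have : y = x := Subtype.ext hyx
  subst this
  exact (hmemH y).mp hy

/-- The map `R/[F,R] →* G^{ab}`. -/
def hopfQWtoAb : hopfQW R →* Abelianization G :=
  QuotientGroup.lift _ (Abelianization.of.comp R.subtype) (by
    intro x hx
    have hc : (x : G) ∈ commutator G := hopfW_le_commutator R (Subgroup.mem_subgroupOf.mp hx)
    show Abelianization.of ((x : G)) = 1
    exact (QuotientGroup.eq_one_iff _).mpr hc)

@[simp] lemma hopfQWtoAb_mk (x : R) :
    hopfQWtoAb R (QuotientGroup.mk x) = Abelianization.of (x : G) := rfl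

lemma abelianization_of_surjective : Function.Surjective (Abelianization.of (G := G)) :=
  fun z => QuotientGroup.induction_on z fun x => ⟨x, rfl⟩

lemma abelianization_of_eq_one_iff (x : G) :
    Abelianization.of x = 1 ↔ x ∈ commutator G := QuotientGroup.eq_one_iff x

end QW


lemma toAddSubgroup_closure {G : Type*} [Group G] (s : Set G) :
    Subgroup.toAddSubgroup (Subgroup.closure s)
      = AddSubgroup.closure (Additive.ofMul '' s) := by
  apply le_antisymm
  · intro x hx
    have hx' : Additive.toMul x ∈ Subgroup.closure s := hx
    have key : ∀ y : G, y ∈ Subgroup.closure s →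
        Additive.ofMul y ∈ AddSubgroup.closure (Additive.ofMul '' s) := by
      intro y hy
      induction hy using Subgroup.closure_induction with
      | mem z hz => exact AddSubgroup.subset_closure (Set.mem_image_of_mem _ hz)
      | one => exact zero_mem _
      | mul y z _ _ hy hz => exact add_mem hy hz
      | inv y _ hy => exact neg_mem hy
    exact key _ hx'
  · rw [AddSubgroup.closure_le]
    rintro x ⟨y, hy, rfl⟩
    show y ∈ Subgroup.closure s
    exact Subgroup.subset_closure hy

lemma pull_gen {G H : Type*} [Group G] [Group H] (j : G →* H)
    (hj : Function.Injective j) (S₀ : Finset H)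
    (hS : Subgroup.closure (S₀ : Set H) = j.range) :
    ∃ S : Finset G, Subgroup.closure (S : Set G) = ⊤ ∧ S.card ≤ S₀.card := by
  classical
  have hpre : ∀ x : H, x ∈ S₀ → ∃ y : G, j y = x := by
    intro x hx
    have : x ∈ j.range := hS ▸ Subgroup.subset_closure hx
    exact this
  choose u hu using hpre
  refine ⟨S₀.attach.image (fun x => u x.1 x.2), ?_, ?_⟩
  · apply Subgroup.map_injective hj
    rw [MonoidHom.map_closure, Finset.coe_image, ← Set.image_comp]
    have himg : (⇑j ∘ fun x : {x // x ∈ S₀} => u x.1 x.2) '' (S₀.attach : Set _)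
        = (S₀ : Set H) := by
      ext x
      constructor
      · rintro ⟨y, -, rfl⟩
        simp only [Function.comp_apply, hu]
        exact y.2
      · intro hx
        exact ⟨⟨x, hx⟩, by simp, by simp [hu]⟩
    rw [himg, hS, ← MonoidHom.range_eq_map]
  · exact (Finset.card_image_le).trans (by simp)

lemma exists_gen_ker {B V : Type*} [AddCommGroup B] [AddCommGroup V]
    (ψ : B →+ V) {r : ℕ} (f : Fin r → B)
    (hf : AddSubgroup.closure (Set.range f) = ⊤) :
    ∃ S : Finset B, (AddSubgroup.closure (S : Set B) = ψ.ker) ∧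
      S.card + Module.finrank ℤ (LinearMap.range ψ.toIntLinearMap) ≤ r := by
  classical
  set ψl := ψ.toIntLinearMap with hψl
  let ρ : (Fin r → ℤ) →ₗ[ℤ] B := (Pi.basisFun ℤ (Fin r)).constr ℤ f
  have hspanf : Submodule.span ℤ (Set.range f) = ⊤ := by
    rw [Submodule.eq_top_iff']
    intro x
    have hx : x ∈ AddSubgroup.closure (Set.range f) := hf ▸ AddSubgroup.mem_top x
    rw [← Submodule.span_int_eq_addSubgroupClosure] at hx
    exact hx
  have hρ : LinearMap.range ρ = ⊤ := by
    rw [Basis.constr_range, hspanf]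
  have hρs : Function.Surjective ρ := LinearMap.range_eq_top.mp hρ
  set χ : (Fin r → ℤ) →ₗ[ℤ] V := ψl.comp ρ with hχ
  set K : Submodule ℤ (Fin r → ℤ) := LinearMap.ker χ with hK
  set d := finrank ℤ K with hd
  let bb : Basis (Fin d) ℤ K := Module.finBasis ℤ K
  have h1 : finrank ℤ ((Fin r → ℤ) ⧸ K) + d = r := by
    rw [hd, Submodule.finrank_quotient_add_finrank, Module.finrank_fin_fun]
  have h2 : finrank ℤ ((Fin r → ℤ) ⧸ K) = finrank ℤ (LinearMap.range χ) :=
    χ.quotKerEquivRange.finrank_eq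
  have h3 : LinearMap.range χ = LinearMap.range ψl := by
    rw [hχ, LinearMap.range_comp, hρ, Submodule.map_top]
  have hcard : finrank ℤ (LinearMap.range ψl) + d = r := by
    rw [← h3, ← h2, h1]
  -- the generating set
  set S : Finset B := Finset.univ.image (fun i : Fin d => ρ (bb i)) with hS
  have hmapK : Submodule.map ρ K = LinearMap.ker ψl := by
    apply le_antisymm
    · rintro _ ⟨x, hx, rfl⟩
      exact hx
    · intro b hb
      obtain ⟨x, rfl⟩ := hρs b
      exact ⟨x, hb, rfl⟩
  have hspan : Submodule.span ℤ (S : Set B) = LinearMap.ker ψl := by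
    rw [hS, Finset.coe_image, Finset.coe_univ, Set.image_univ]
    have : Set.range (fun i : Fin d => ρ (bb i)) = ⇑ρ '' (⇑K.subtype '' Set.range ⇑bb) := by
      ext x
      simp
    rw [this, Submodule.span_image, Submodule.span_image, Basis.span_eq,
      Submodule.map_top, Submodule.range_subtype, hmapK]
  refine ⟨S, ?_, ?_⟩
  · have h4 := Submodule.span_int_eq_addSubgroupClosure (M := B) (S : Set B)
    have h5 : (LinearMap.ker ψl).toAddSubgroup = ψ.ker := by
      ext x
      simp [LinearMap.mem_ker, AddMonoidHom.mem_ker, hψl]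
    rw [← h5, ← hspan, ← h4]
  · calc S.card + finrank ℤ (LinearMap.range ψl)
        ≤ d + finrank ℤ (LinearMap.range ψl) := by
          gcongr
          exact (Finset.card_image_le).trans (by simp)
      _ = r := by rw [add_comm]; exact hcard

/-- Let `Γ` be a group admitting a finite presentation with `g` generators
and `r` relators, i.e. a surjection `π : F(g) → Γ` from the free group of rank `g` whose
kernel is the normal closure of `r` elements.  Then the minimal number of generators of
the abelian group `H₂(Γ;ℤ)` (computed here via Hopf's formula from the presentation) is
at most `r - g + rk(H₁(Γ;ℤ))`; equivalently `d(H₂(Γ)) - rk(H₁(Γ)) ≤ r - g`.  (We state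
this as the existence of a generating set of cardinality at most `r - g + rk(H₁(Γ))`.) -/
theorem dH2_le_defect_add_rkH1 (Γ : Type*) [Group Γ] (g r : ℕ)
    (π : FreeGroup (Fin g) →* Γ) (hπ : Function.Surjective π)
    (rel : Fin r → FreeGroup (Fin g))
    (hker : π.ker = Subgroup.normalClosure (Set.range rel)) :
    ∃ S : Finset (hopfH2 π),
      Subgroup.closure (S : Set (hopfH2 π)) = ⊤ ∧
      (S.card : ℤ) ≤ (r : ℤ) - (g : ℤ) + (rkH1 Γ : ℤ) := by
  classical
  -- notation
  set R : Subgroup (FreeGroup (Fin g)) := π.ker with hR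
  have hrel : ∀ i, rel i ∈ R := by
    intro i
    rw [hker]
    exact Subgroup.subset_normalClosure ⟨i, rfl⟩
  -- the r generators of Q = R/[F,R]
  have hgen := hopfQW_closure_top R rel hrel (le_of_eq hker)
  set φ : hopfQW R →* Abelianization (FreeGroup (Fin g)) := hopfQWtoAb R with hφ
  set ψ := MonoidHom.toAdditive φ with hψ
  set ψl := ψ.toIntLinearMap with hψl
  -- additive generation
  have hfadd : AddSubgroup.closure
      (Set.range fun i => Additive.ofMul
        ((QuotientGroup.mk ⟨rel i, hrel i⟩ : hopfQW R))) = ⊤ := by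
    have h1 : (Set.range fun i => Additive.ofMul
        ((QuotientGroup.mk ⟨rel i, hrel i⟩ : hopfQW R)))
        = Additive.ofMul '' (Set.range fun i =>
            (QuotientGroup.mk ⟨rel i, hrel i⟩ : hopfQW R)) := by
      rw [← Set.range_comp]
      rfl
    rw [h1, ← toAddSubgroup_closure, hgen]
    rfl
  obtain ⟨S₀a, hS₀cl, hS₀card⟩ := exists_gen_ker ψ _ hfadd
  rw [← hψl] at hS₀card
  -- rank arithmetic
  set V := Additive (Abelianization (FreeGroup (Fin g))) with hV
  let b : Basis (Fin g) ℤ V :=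
    (Finsupp.basisSingleOne).map (abFreeEquiv (Fin g)).toIntLinearEquiv.symm
  haveI : Module.Finite ℤ V := Module.Finite.of_basis b
  have hVg : finrank ℤ V = g := by
    rw [finrank_eq_card_basis b, Fintype.card_fin]
  set p : Abelianization (FreeGroup (Fin g)) →* Abelianization Γ := Abelianization.map π with hp
  have hpsurj : Function.Surjective p := by
    intro z
    obtain ⟨y, rfl⟩ := abelianization_of_surjective z
    obtain ⟨x, rfl⟩ := hπ y
    exact ⟨Abelianization.of x, Abelianization.map_of π x⟩
  set q : V →ₗ[ℤ] Additive (Abelianization Γ) := (MonoidHom.toAdditive p).toIntLinearMap with hq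
  have hqsurj : Function.Surjective q := by
    intro z
    obtain ⟨x, hx⟩ := hpsurj (Additive.toMul z)
    exact ⟨Additive.ofMul x, congrArg Additive.ofMul hx⟩
  have hkerq : LinearMap.ker q = LinearMap.range ψl := by
    ext v
    constructor
    · intro hv
      obtain ⟨w, hw⟩ := abelianization_of_surjective (Additive.toMul v)
      have h1 : Abelianization.of (π w) = 1 := by
        have h0 : p (Abelianization.of w) = 1 := by
          rw [hw]
          exact hv
        rwa [Abelianization.map_of] at h0
      have h2 : π w ∈ commutator Γ := (abelianization_of_eq_one_iff _).mp h1
      have h3 : commutator Γ = Subgroup.map π (commutator (FreeGroup (Fin g))) := by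
        rw [commutator_def, commutator_def, Subgroup.map_commutator,
          Subgroup.map_top_of_surjective π hπ]
      rw [h3] at h2
      obtain ⟨c, hc, hcw⟩ := Subgroup.mem_map.mp h2
      have hy : w * c⁻¹ ∈ R := by
        rw [hR, MonoidHom.mem_ker, map_mul, map_inv, hcw]
        group
      refine ⟨Additive.ofMul (QuotientGroup.mk ⟨w * c⁻¹, hy⟩), ?_⟩
      show Additive.ofMul (Abelianization.of (w * c⁻¹)) = v
      rw [map_mul, map_inv]
      have hc1 : Abelianization.of c = 1 := (abelianization_of_eq_one_iff _).mpr hc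
      rw [hc1, inv_one, mul_one, hw]
      rfl
    · rintro ⟨x, rfl⟩
      obtain ⟨y, hy⟩ := QuotientGroup.mk'_surjective _ (Additive.toMul x)
      have h1 : ψl x = Additive.ofMul (Abelianization.of ((y : FreeGroup (Fin g)))) := by
        show Additive.ofMul (φ (Additive.toMul x)) = _
        rw [← hy]
        rfl
      rw [LinearMap.mem_ker, h1]
      show Additive.ofMul (p (Abelianization.of ((y : FreeGroup (Fin g))))) = 0
      rw [Abelianization.map_of]
      have : π (y : FreeGroup (Fin g)) = 1 := y.2
      rw [this, map_one]
      rfl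
  have hrkq : finrank ℤ (V ⧸ LinearMap.ker q) = finrank ℤ (Additive (Abelianization Γ)) :=
    (q.quotKerEquivOfSurjective hqsurj).finrank_eq
  have hrn := Submodule.finrank_quotient_add_finrank (R := ℤ) (LinearMap.ker q)
  have hrk : rkH1 Γ = finrank ℤ (Additive (Abelianization Γ)) :=
    finrank_rat_tensor (Additive (Abelianization Γ))
  have hk : finrank ℤ (LinearMap.range ψl) + rkH1 Γ = g := by
    rw [← hkerq, hrk, ← hrkq, add_comm, hrn, hVg]
  -- back to multiplicative world
  set S₀ : Finset (hopfQW R) := S₀a.image Additive.toMul with hS₀def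
  have hcard01 : S₀.card ≤ S₀a.card := Finset.card_image_le
  have hS₀ : Subgroup.closure (S₀ : Set (hopfQW R)) = φ.ker := by
    apply Subgroup.toAddSubgroup.injective
    have himg : Additive.ofMul '' (S₀ : Set (hopfQW R)) = (S₀a : Set _) := by
      rw [hS₀def, Finset.coe_image]
      ext x
      simp
    rw [toAddSubgroup_closure, himg, hS₀cl, hψ, MonoidHom.coe_toAdditive_ker]
  -- the injection j : hopfH2 π →* hopfQW R
  have hWle : (⁅(⊤ : Subgroup (FreeGroup (Fin g))), π.ker⁆ : Subgroup (FreeGroup (Fin g))).subgroupOf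
        (π.ker ⊓ commutator (FreeGroup (Fin g)))
      ≤ Subgroup.comap (Subgroup.inclusion inf_le_left) ((hopfW R).subgroupOf R) := by
    intro x hx
    have h1 : (x : FreeGroup (Fin g)) ∈ hopfW R := Subgroup.mem_subgroupOf.mp hx
    exact Subgroup.mem_subgroupOf.mpr h1
  let j : hopfH2 π →* hopfQW R := QuotientGroup.map _ _ (Subgroup.inclusion inf_le_left) hWle
  have hjmk : ∀ x : ↥(π.ker ⊓ commutator (FreeGroup (Fin g))),
      j (QuotientGroup.mk x) = QuotientGroup.mk (Subgroup.inclusion inf_le_left x) :=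
    fun x => rfl
  have hjinj : Function.Injective j := by
    rw [← MonoidHom.ker_eq_bot_iff, eq_bot_iff]
    intro a ha
    revert ha
    refine QuotientGroup.induction_on a fun x => ?_
    intro hx
    have h1 : (QuotientGroup.mk (Subgroup.inclusion inf_le_left x) : hopfQW R) = 1 := by
      rw [← hjmk x]
      exact hx
    rw [QuotientGroup.eq_one_iff] at h1
    have h2 : (x : FreeGroup (Fin g)) ∈ hopfW R := Subgroup.mem_subgroupOf.mp h1
    refine Subgroup.mem_bot.mpr ((QuotientGroup.eq_one_iff _).mpr ?_)
    exact Subgroup.mem_subgroupOf.mpr h2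
  have hjrange : j.range = φ.ker := by
    ext z
    constructor
    · rintro ⟨a, rfl⟩
      refine QuotientGroup.induction_on a fun x => ?_
      show φ (j (QuotientGroup.mk x)) = 1
      rw [hjmk x]
      show Abelianization.of ((x : FreeGroup (Fin g))) = 1
      exact (abelianization_of_eq_one_iff _).mpr x.2.2
    · intro hz
      revert hz
      refine QuotientGroup.induction_on z fun y => ?_
      intro hy
      have h1 : Abelianization.of ((y : FreeGroup (Fin g))) = 1 := hy
      have h2 : (y : FreeGroup (Fin g)) ∈ commutator (FreeGroup (Fin g)) :=
        (abelianization_of_eq_one_iff _).mp h1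
      refine ⟨QuotientGroup.mk
        (⟨(y : FreeGroup (Fin g)), ⟨y.2, h2⟩⟩ : ↥(π.ker ⊓ commutator (FreeGroup (Fin g)))), ?_⟩
      rw [hjmk]
      congr 1
  obtain ⟨S, hScl, hScard⟩ := pull_gen j hjinj S₀ (hS₀.trans hjrange.symm)
  refine ⟨S, hScl, ?_⟩
  have h6 : S.card ≤ S₀a.card := hScard.trans hcard01
  omega
end

section
/- Let m, n ≥ 1 and let Γ_{m,n} be the presented group ⟨x_m, t_m, x_n, t_n | ρ_m(x_m,t_m), ρ_n(x_n,t_n), x_m^m, x_n^n⟩. Then every element of finite order in Γ_{m,n} is conjugate in Γ_{m,n} to an element of the subgroup H_m generated by {x_m, t_m x_m t_m⁻¹} or to an element of the subgroup H_n generated by {x_n, t_n x_n t_n⁻¹}. -/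
namespace MyTorsion

open Monoid

theorem conj_conj {G : Type*} [Group G] (c' c x g : G) (h1 : c'⁻¹ * g * c' = c * x * c⁻¹) :
    (c' * c) * x * (c' * c)⁻¹ = g := by
  have h2 := congrArg (fun y => c' * y * c'⁻¹) h1
  simpa [mul_assoc] using h2.symm

theorem conj_isOfFinOrder {G : Type*} [Group G] {g : G} (c : G) (h : IsOfFinOrder g) :
    IsOfFinOrder (c * g * c⁻¹) := by
  rw [isOfFinOrder_iff_pow_eq_one] at h ⊢
  obtain ⟨n, hn, h⟩ := h
  exact ⟨n, hn, by rw [conj_pow, h, mul_one, mul_inv_cancel]⟩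

section CoprodITorsion

variable {ι : Type*} {M : ι → Type*} [∀ i, Group (M i)]

open CoprodI CoprodI.Word

theorem word_prod_ne_one (w : Word M) (hw : w.toList ≠ []) : w.prod ≠ 1 := by
  classical
  intro h
  have : w = Word.empty := by
    have := Word.equiv (M := M) |>.symm.injective (a₁ := w) (a₂ := Word.empty)
    simp only [Equiv.symm] at this
    exact this (by simpa [Word.equiv] using h)
  exact hw (by simp [this, Word.empty])

theorem neword_pow_ne_one {i j : ι} (nw : NeWord M i j) (hij : i ≠ j) (n : ℕ) :
    nw.prod ^ (n + 1) ≠ 1 := by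
  classical
  suffices h : ∀ n : ℕ, ∃ nw' : NeWord M i j, nw'.prod = nw.prod ^ (n + 1) by
    obtain ⟨nw', hnw'⟩ := h n
    rw [← hnw']
    exact word_prod_ne_one nw'.toWord nw'.toList_ne_nil
  intro n
  induction n with
  | zero => exact ⟨nw, by simp⟩
  | succ k ih =>
    obtain ⟨nw', hnw'⟩ := ih
    exact ⟨NeWord.append nw hij.symm nw',
      by rw [NeWord.append_prod, hnw']; exact (pow_succ' _ _).symm⟩

/-- Torsion elements of a free product are conjugate into one of the factors. -/
theorem coprodI_torsion_conj [Nonempty ι] (g : CoprodI M) (hg : IsOfFinOrder g) :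
    ∃ (i : ι) (h : M i) (c : CoprodI M), c * CoprodI.of h * c⁻¹ = g := by
  classical
  suffices h : ∀ (N : ℕ) (g : CoprodI M) (w : Word M), w.prod = g → w.toList.length ≤ N →
      IsOfFinOrder g → ∃ (i : ι) (h : M i) (c : CoprodI M), c * CoprodI.of h * c⁻¹ = g by
    exact h (Word.equiv g).toList.length g (Word.equiv g) (Word.equiv.symm_apply_apply g)
      le_rfl hg
  intro N
  induction N with
  | zero =>
    intro g w hw hlen _
    have hnil : w.toList = [] := List.eq_nil_of_length_eq_zero (Nat.le_zero.mp hlen)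
    refine ⟨Classical.arbitrary ι, 1, 1, ?_⟩
    rw [map_one, ← hw]
    simp [Word.prod, hnil]
  | succ N ih =>
    intro g w hw hlen hg
    rcases hl : w.toList with _ | ⟨⟨k₀, m⟩, l₁'⟩
    · refine ⟨Classical.arbitrary ι, 1, 1, ?_⟩
      rw [map_one, ← hw]
      simp [Word.prod, hl]
    rcases List.eq_nil_or_concat l₁' with rfl | ⟨l₁, ⟨k₂, m'⟩, rfl⟩
    · -- single letter
      refine ⟨k₀, m, 1, ?_⟩
      rw [← hw]
      simp [Word.prod, hl]
    · -- at least two letters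
      rw [List.concat_eq_append] at hl
      by_cases hk : k₀ = k₂
      · -- cyclic reduction
        subst hk
        have hchain := w.chain_ne
        have hne_one := w.ne_one
        rw [hl] at hchain hne_one
        have hchain_tail : (l₁ ++ [⟨k₀, m'⟩] : List (Σ i, M i)).IsChain
            (fun l l' => l.1 ≠ l'.1) := (List.isChain_cons.mp hchain).2
        have hchain_l₁ : l₁.IsChain (fun l l' : (Σ i, M i) => l.1 ≠ l'.1) :=
          (List.isChain_append.mp hchain_tail).1
        have hlast_l₁ : ∀ x ∈ l₁.getLast?, (Sigma.fst x) ≠ k₀ := by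
          intro x hx
          exact (List.isChain_append.mp hchain_tail).2.2 x hx ⟨k₀, m'⟩ rfl
        have hne_one_l₁ : ∀ x ∈ l₁, Sigma.snd x ≠ 1 := fun x hx =>
          hne_one x (by simp [hx])
        have hlength : l₁.length + 2 ≤ N + 1 := by
          have h1 : w.toList.length ≤ N + 1 := hlen
          rw [hl] at h1
          simpa using h1
        let w₁ : Word M := ⟨l₁, hne_one_l₁, hchain_l₁⟩
        have hprodw₁ : w₁.prod = (l₁.map fun l => CoprodI.of l.snd).prod := rfl
        have hg' : (CoprodI.of m)⁻¹ * g * CoprodI.of m = w₁.prod * CoprodI.of (m' * m) := by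
          rw [← hw]
          show _ = _
          rw [Word.prod, hl, List.map_cons, List.map_append, List.prod_cons, List.prod_append,
            List.map_singleton, List.prod_singleton, ← hprodw₁, map_mul]
          simp [mul_assoc]
        by_cases hq : m' * m = 1
        · -- letters cancel; use w₁
          rw [hq, map_one, mul_one] at hg'
          obtain ⟨i, h, c, hc⟩ := ih w₁.prod w₁ rfl (by show l₁.length ≤ N; omega)
            (by rw [← hg']; simpa using conj_isOfFinOrder (CoprodI.of m)⁻¹ hg)
          exact ⟨i, h, CoprodI.of m * c, conj_conj _ _ _ _ (by rw [hg', hc])⟩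
        · -- merge the letters; use w₂ = l₁ ++ [⟨k₀, m' * m⟩]
          have hne_one₂ : ∀ x ∈ l₁ ++ [(⟨k₀, m' * m⟩ : Σ i, M i)], Sigma.snd x ≠ 1 := by
            intro x hx
            rcases List.mem_append.mp hx with hx | hx
            · exact hne_one_l₁ x hx
            · simp only [List.mem_singleton] at hx
              subst hx
              exact hq
          have hchain₂ : (l₁ ++ [(⟨k₀, m' * m⟩ : Σ i, M i)]).IsChain
              (fun l l' => l.1 ≠ l'.1) := by
            rw [List.isChain_append]
            refine ⟨hchain_l₁, List.isChain_singleton _, ?_⟩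
            intro x hx y hy
            simp only [List.head?_cons, Option.mem_some_iff] at hy
            subst hy
            exact hlast_l₁ x hx
          let w₂ : Word M := ⟨l₁ ++ [⟨k₀, m' * m⟩], hne_one₂, hchain₂⟩
          have hprodw₂ : w₂.prod = w₁.prod * CoprodI.of (m' * m) := by
            show ((l₁ ++ [(⟨k₀, m' * m⟩ : Σ i, M i)]).map fun l => CoprodI.of l.snd).prod = _
            rw [List.map_append, List.prod_append, List.map_singleton, List.prod_singleton,
              hprodw₁]
          obtain ⟨i, h, c, hc⟩ := ih w₂.prod w₂ rfl
            (by show (l₁ ++ [(⟨k₀, m' * m⟩ : Σ i, M i)]).length ≤ N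
                rw [List.length_append, List.length_singleton]; omega)
            (by rw [hprodw₂, ← hg']; simpa using conj_isOfFinOrder (CoprodI.of m)⁻¹ hg)
          exact ⟨i, h, CoprodI.of m * c, conj_conj _ _ _ _ (by rw [hg', ← hprodw₂, hc])⟩
      · -- first and last indices differ : contradiction
        exfalso
        have hwne : w ≠ Word.empty := by
          intro h
          rw [h] at hl
          simp [Word.empty] at hl
        obtain ⟨i, j, nw, hnw⟩ := NeWord.of_word w hwne
        have htl : nw.toList = w.toList := by rw [← hnw]; rfl
        have hhead : i = k₀ := by
          have h1 := nw.toList_head?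
          rw [htl, hl] at h1
          simpa using congrArg (Option.map Sigma.fst) h1.symm
        have hlast : j = k₂ := by
          have h1 := nw.toList_getLast?
          rw [htl, hl, ← List.cons_append, List.getLast?_concat] at h1
          simpa using congrArg (Option.map Sigma.fst) h1.symm
        obtain ⟨nn, hnn, hpow⟩ := isOfFinOrder_iff_pow_eq_one.mp hg
        obtain ⟨nn, rfl⟩ := Nat.exists_eq_succ_of_ne_zero (Nat.pos_iff_ne_zero.mp hnn)
        refine neword_pow_ne_one nw (hhead ▸ hlast ▸ hk) nn ?_
        have : nw.prod = g := by rw [← hw, NeWord.prod, hnw]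
        rw [this, hpow]

end CoprodITorsion


section HNNTorsion

open HNNExtension

variable {G : Type*} [Group G] {A B : Subgroup G} (φ : A ≃* B)

/-- The product of the list part of a reduced word. -/
def lp (l : List (ℤˣ × G)) : HNNExtension G A B φ :=
  (l.map fun x => t ^ (x.1 : ℤ) * of x.2).prod

/-- The chain condition of reduced words. -/
def RR (A B : Subgroup G) : (ℤˣ × G) → (ℤˣ × G) → Prop :=
  fun a b => a.2 ∈ toSubgroup A B a.1 → a.1 = b.1

theorem lp_nil : lp φ ([] : List (ℤˣ × G)) = 1 := rfl

theorem lp_append (l₁ l₂ : List (ℤˣ × G)) : lp φ (l₁ ++ l₂) = lp φ l₁ * lp φ l₂ := by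
  simp [lp]

theorem lp_cons (a : ℤˣ × G) (l : List (ℤˣ × G)) :
    lp φ (a :: l) = t ^ (a.1 : ℤ) * of a.2 * lp φ l := by
  simp [lp]

theorem lp_singleton (a : ℤˣ × G) : lp φ [a] = t ^ (a.1 : ℤ) * of a.2 := by
  simp [lp]

/-- `t^u * of a * t^(-u) = of (toSubgroupEquiv φ u ⟨a, ha⟩)`. -/
theorem t_conj (u : ℤˣ) (a : G) (ha : a ∈ toSubgroup A B u) :
    (t ^ (u : ℤ) * of a * t ^ (-u : ℤ) : HNNExtension G A B φ) =
      of (toSubgroupEquiv φ u ⟨a, ha⟩ : G) := by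
  rcases Int.units_eq_one_or u with rfl | rfl
  · convert (equiv_eq_conj (φ := φ) ⟨a, ha⟩).symm using 1
    · simp
    · rfl
  · convert (equiv_symm_eq_conj (φ := φ) ⟨a, ha⟩).symm using 1
    · simp
    · rfl

/-- Powers of a cyclically reduced word with at least one `t` are nontrivial. -/
theorem lp_pow_ne_one (l : List (ℤˣ × G)) (hl : l ≠ []) (hchain : l.IsChain (RR A B))
    (hcyc : RR A B (l.getLast hl) (l.head hl)) (n : ℕ) :
    (lp φ l) ^ (n + 1) ≠ 1 := by
  -- build the replicated list
  suffices h : ∀ n : ℕ, ∃ l' : List (ℤˣ × G), l' ≠ [] ∧ l'.IsChain (RR A B) ∧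
      l'.head? = l.head? ∧ lp φ l' = (lp φ l) ^ (n + 1) by
    obtain ⟨l', hne, hchain', _, hprod⟩ := h n
    intro hone
    have : ((⟨1, l', hchain'⟩ : NormalWord.ReducedWord G A B) : NormalWord.ReducedWord G A B).prod φ ∈
        (of.range : Subgroup (HNNExtension G A B φ)) := by
      have : ((⟨1, l', hchain'⟩ : NormalWord.ReducedWord G A B) : NormalWord.ReducedWord G A B).prod φ = 1 := by
        show of (1 : G) * _ = 1
        rw [map_one, one_mul]
        exact hprod.trans hone
      rw [this]
      exact one_mem _
    exact hne (HNNExtension.ReducedWord.toList_eq_nil_of_mem_of_range φ _ this)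
  intro n
  induction n with
  | zero => exact ⟨l, hl, hchain, rfl, by simp⟩
  | succ k ih =>
    obtain ⟨l', hne, hchain', hhead, hprod⟩ := ih
    refine ⟨l ++ l', by simp [hl], ?_, ?_, ?_⟩
    · rw [List.isChain_append]
      refine ⟨hchain, hchain', ?_⟩
      intro x hx y hy
      rw [List.getLast?_eq_getLast hl, Option.mem_some_iff] at hx
      subst hx
      rw [hhead, List.head?_eq_head hl, Option.mem_some_iff] at hy
      subst hy
      exact hcyc
    · rw [List.head?_append_of_ne_nil _ hl]
    · rw [lp_append, hprod, ← pow_succ']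

/-- Cyclic reduction for HNN extensions. -/
theorem hnn_cyc_red : ∀ (N : ℕ) (l : List (ℤˣ × G)), l.length ≤ N → l.IsChain (RR A B) →
    ∀ g₀ : G,
    (∃ (c : HNNExtension G A B φ) (h : G), c * of h * c⁻¹ = of g₀ * lp φ l) ∨
    (∃ (c : HNNExtension G A B φ) (l' : List (ℤˣ × G)) (hl' : l' ≠ []),
      l'.IsChain (RR A B) ∧ RR A B (l'.getLast hl') (l'.head hl') ∧
      c * lp φ l' * c⁻¹ = of g₀ * lp φ l) := by
  intro N
  induction N with
  | zero =>
    intro l hlen _ g₀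
    have : l = [] := List.eq_nil_of_length_eq_zero (Nat.le_zero.mp hlen)
    subst this
    exact Or.inl ⟨1, g₀, by simp [lp_nil]⟩
  | succ N ih =>
    intro l hlen hchain g₀
    rcases List.eq_nil_or_concat l with rfl | ⟨l₀, ⟨u, b⟩, rfl⟩
    · exact Or.inl ⟨1, g₀, by simp [lp_nil]⟩
    rw [List.concat_eq_append] at *
    -- the conjugated word l₂ with g₀ absorbed
    set a : G := b * g₀ with ha
    have hchain₂ : (l₀ ++ [(u, a)]).IsChain (RR A B) := by
      rw [List.isChain_append] at hchain ⊢
      refine ⟨hchain.1, List.isChain_singleton _, ?_⟩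
      intro x hx y hy
      simp only [List.head?_cons, Option.mem_some_iff] at hy
      subst hy
      exact fun hin => hchain.2.2 x hx (u, b) rfl hin
    have hne₂ : l₀ ++ [(u, a)] ≠ [] := by simp
    have hprod₂ : lp φ (l₀ ++ [(u, a)]) = lp φ (l₀ ++ [(u, b)]) * of g₀ := by
      rw [lp_append, lp_append, lp_singleton, lp_singleton, ha, map_mul]
      simp [mul_assoc]
    have hgetLast₂ : (l₀ ++ [(u, a)]).getLast hne₂ = (u, a) := by simp
    by_cases hcyc : RR A B ((l₀ ++ [(u, a)]).getLast hne₂) ((l₀ ++ [(u, a)]).head hne₂)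
    · -- already cyclically reduced
      refine Or.inr ⟨of g₀, l₀ ++ [(u, a)], hne₂, hchain₂, hcyc, ?_⟩
      rw [hprod₂]
      simp [mul_assoc]
    · -- pinch at the seam
      rw [hgetLast₂] at hcyc
      rw [RR] at hcyc
      push_neg at hcyc
      obtain ⟨hain, hune⟩ := hcyc
      -- l₀ is nonempty
      rcases l₀ with _ | ⟨⟨u₁, g₁⟩, l₁⟩
      · simp at hune
      have hhead : ((u₁, g₁) :: l₁ ++ [(u, a)] : List _).head (by simp) = (u₁, g₁) := rfl
      rw [hhead] at hune
      have hu₁ : (u₁ : ℤ) = (-u : ℤ) := by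
        clear * - hune
        rcases Int.units_eq_one_or u with rfl | rfl <;>
          rcases Int.units_eq_one_or u₁ with rfl | rfl <;>
            first
              | exact absurd rfl hune
              | rfl
              | norm_num
      -- key computation
      set z : HNNExtension G A B φ := t ^ (u : ℤ) * of a with hz
      have hsplit : lp φ ((u₁, g₁) :: l₁ ++ [(u, a)]) = lp φ ((u₁, g₁) :: l₁) * z := by
        rw [lp_append, lp_singleton]
      set g₀' : G := (toSubgroupEquiv φ u ⟨a, hain⟩ : G) * g₁ with hg₀'
      have hkey : z * lp φ ((u₁, g₁) :: l₁) = of g₀' * lp φ l₁ := by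
        rw [lp_cons]
        calc z * (t ^ ((u₁ : ℤ)) * of g₁ * lp φ l₁)
            = (t ^ (u : ℤ) * of a * t ^ ((u₁ : ℤ))) * (of g₁ * lp φ l₁) := by
              rw [hz]; simp [mul_assoc]
          _ = of (toSubgroupEquiv φ u ⟨a, hain⟩ : G) * (of g₁ * lp φ l₁) := by
              rw [hu₁, t_conj φ u a hain]
          _ = of g₀' * lp φ l₁ := by rw [hg₀', map_mul, mul_assoc]
      have hchain₁ : l₁.IsChain (RR A B) :=
        ((List.isChain_cons.mp ((List.isChain_append.mp hchain₂).1)).2)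
      have hlen₁ : l₁.length ≤ N := by
        simp only [List.length_append, List.length_cons, List.length_singleton] at hlen
        omega
      have hb2 : lp φ ((u₁, g₁) :: l₁ ++ [(u, b)]) =
          lp φ ((u₁, g₁) :: l₁ ++ [(u, a)]) * (of g₀)⁻¹ := by
        rw [hprod₂]; simp [mul_assoc]
      have hconj : (of g₀ * z⁻¹)⁻¹ * (of g₀ * lp φ ((u₁, g₁) :: l₁ ++ [(u, b)])) *
          (of g₀ * z⁻¹) = z * lp φ ((u₁, g₁) :: l₁) := by
        rw [mul_inv_rev, inv_inv, hb2, hsplit]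
        simp [mul_assoc]
      -- recurse
      rcases ih l₁ hlen₁ hchain₁ g₀' with ⟨c, h, hc⟩ | ⟨c, l', hl', hch', hcyc', hc⟩
      · refine Or.inl ⟨(of g₀ * z⁻¹) * c, h, conj_conj _ _ _ _ ?_⟩
        rw [hc, ← hkey]
        exact hconj
      · refine Or.inr ⟨(of g₀ * z⁻¹) * c, l', hl', hch', hcyc', conj_conj _ _ _ _ ?_⟩
        rw [hc, ← hkey]
        exact hconj

/-- Torsion elements of an HNN extension are conjugate into the base group. -/
theorem hnn_torsion_conj (x : HNNExtension G A B φ) (hx : IsOfFinOrder x) :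
    ∃ (c : HNNExtension G A B φ) (h : G), c * of h * c⁻¹ = x := by
  classical
  obtain ⟨d⟩ := NormalWord.TransversalPair.nonempty G A B
  set w : NormalWord d := NormalWord.equiv φ d x with hwdef
  have hxw : of w.head * lp φ w.toList = x := by
    have : w.prod φ = x := (NormalWord.equiv φ d).symm_apply_apply x
    rw [← this]
    rfl
  rcases hnn_cyc_red φ w.toList.length w.toList le_rfl w.chain w.head with
    ⟨c, h, hc⟩ | ⟨c, l', hl', hch', hcyc', hc⟩
  · exact ⟨c, h, by rw [hc, hxw]⟩
  · exfalso
    rw [hxw] at hc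
    have hfin : IsOfFinOrder (lp φ l') := by
      have : lp φ l' = c⁻¹ * x * c := by
        rw [← hc]; simp [mul_assoc]
      rw [this]
      simpa using conj_isOfFinOrder c⁻¹ hx
    obtain ⟨nn, hnn, hpow⟩ := isOfFinOrder_iff_pow_eq_one.mp hfin
    obtain ⟨nn, rfl⟩ := Nat.exists_eq_succ_of_ne_zero (Nat.pos_iff_ne_zero.mp hnn)
    exact lp_pow_ne_one φ l' hl' hch' hcyc' nn hpow

end HNNTorsion

section Construction

/-- The base group `(ℤ/k)²` written multiplicatively. -/
abbrev Mk (k : ℕ) : Type := Multiplicative (ZMod k × ZMod k)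

/-- First generator. -/
def xg (k : ℕ) : Mk k := Multiplicative.ofAdd (1, 0)

/-- Second generator. -/
def yg (k : ℕ) : Mk k := Multiplicative.ofAdd (0, 1)

/-- The swap automorphism. -/
def swE (k : ℕ) : Mk k ≃* Mk k := AddEquiv.toMultiplicative (AddEquiv.prodComm)

theorem swE_xg (k : ℕ) : swE k (xg k) = yg k := rfl
theorem swE_yg (k : ℕ) : swE k (yg k) = xg k := rfl

def Ak (k : ℕ) : Subgroup (Mk k) := Subgroup.zpowers (xg k)
def Bk (k : ℕ) : Subgroup (Mk k) := Subgroup.zpowers (yg k)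

theorem xg_mem_Ak (k : ℕ) : xg k ∈ Ak k := Subgroup.mem_zpowers _

theorem swE_mem_Bk (k : ℕ) {a : Mk k} (ha : a ∈ Ak k) : swE k a ∈ Bk k := by
  obtain ⟨z, rfl⟩ := ha
  exact ⟨z, by rw [map_zpow, swE_xg]⟩

theorem swE_mem_Ak (k : ℕ) {a : Mk k} (ha : a ∈ Bk k) : swE k a ∈ Ak k := by
  obtain ⟨z, rfl⟩ := ha
  exact ⟨z, by rw [map_zpow, swE_yg]⟩

theorem swE_swE (k : ℕ) (a : Mk k) : swE k (swE k a) = a := rfl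

/-- The isomorphism `⟨x⟩ ≃* ⟨y⟩` given by the swap. -/
def φk (k : ℕ) : Ak k ≃* Bk k where
  toFun a := ⟨swE k a, swE_mem_Bk k a.2⟩
  invFun b := ⟨swE k b, swE_mem_Ak k b.2⟩
  left_inv a := by apply Subtype.ext; exact swE_swE k a
  right_inv b := by apply Subtype.ext; exact swE_swE k b
  map_mul' a b := by apply Subtype.ext; exact map_mul (swE k) (a : Mk k) (b : Mk k)

theorem φk_coe (k : ℕ) (a : Ak k) : (φk k a : Mk k) = swE k (a : Mk k) := rfl

theorem xg_pow_k (k : ℕ) : xg k ^ k = 1 := by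
  show Multiplicative.ofAdd ((1 : ZMod k), (0 : ZMod k)) ^ k = 1
  rw [← ofAdd_nsmul]
  have : k • ((1 : ZMod k), (0 : ZMod k)) = ((0 : ZMod k), (0 : ZMod k)) := by
    rw [Prod.smul_mk, smul_zero, nsmul_eq_mul, mul_one, ZMod.natCast_self]
  rw [this]
  rfl

/-- The HNN extension `G_k`. -/
abbrev HG (k : ℕ) : Type := HNNExtension (Mk k) (Ak k) (Bk k) (φk k)

open HNNExtension in
theorem HG_t_x_t (k : ℕ) :
    (t * of (xg k) * t⁻¹ : HG k) = of (yg k) := by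
  have := equiv_eq_conj (φ := φk k) ⟨xg k, xg_mem_Ak k⟩
  rw [φk_coe] at this
  exact this.symm

/-- `rhoWord` maps through homomorphisms. -/
theorem map_rhoWord {G H : Type*} [Group G] [Group H] (f : G →* H) (k : ℕ) (x t : G) :
    f (rhoWord k x t) = rhoWord k (f x) (f t) := by
  simp [rhoWord, map_mul, map_inv, map_zpow]

/-- Key commutative-group computation. -/
theorem rho_eval {C : Type*} [CommGroup C] (k : ℕ) (x y : C) (hx : x ^ k = 1) :
    y * x * y⁻¹ * x ^ (-(k + 1 : ℤ)) = 1 := by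
  rw [mul_comm y x, mul_inv_cancel_right]
  rw [← zpow_one x, ← zpow_mul, one_mul, ← zpow_add]
  have : (1 + -(k + 1) : ℤ) = -(k : ℤ) := by ring
  rw [this, zpow_neg, zpow_natCast, hx, inv_one]

open HNNExtension in
theorem HG_rho (k : ℕ) : rhoWord k (of (xg k)) (t : HG k) = 1 := by
  rw [rhoWord, HG_t_x_t]
  simp only [← map_inv, ← map_zpow, ← map_mul]
  rw [rho_eval k (xg k) (yg k) (xg_pow_k k), map_one]

open HNNExtension in
theorem HG_x_pow (k : ℕ) : (of (xg k) : HG k) ^ k = 1 := by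
  rw [← map_pow, xg_pow_k, map_one]

/-- A homomorphism out of `Mk k` determined by images of the two generators. -/
def ψk {Γ : Type*} [Group Γ] (k : ℕ) [NeZero k] (X Y : Γ) (hX : X ^ k = 1) (hY : Y ^ k = 1)
    (hc : Commute X Y) : Mk k →* Γ :=
  MonoidHom.mk' (fun p => X ^ (Multiplicative.toAdd p).1.val * Y ^ (Multiplicative.toAdd p).2.val)
  (by
    intro a b
    have h1 : ∀ (Z : Γ) (hZ : Z ^ k = 1) (s t : ZMod k), Z ^ (s + t).val = Z ^ s.val * Z ^ t.val := by
      intro Z hZ s t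
      rw [ZMod.val_add, ← pow_eq_pow_mod _ hZ, pow_add]
    show X ^ ((Multiplicative.toAdd a).1 + (Multiplicative.toAdd b).1).val *
        Y ^ ((Multiplicative.toAdd a).2 + (Multiplicative.toAdd b).2).val = _
    rw [h1 X hX, h1 Y hY]
    show _ = X ^ (Multiplicative.toAdd a).1.val * Y ^ (Multiplicative.toAdd a).2.val *
      (X ^ (Multiplicative.toAdd b).1.val * Y ^ (Multiplicative.toAdd b).2.val)
    exact (hc.pow_pow _ _).mul_mul_mul_comm _ _)

theorem ψk_apply {Γ : Type*} [Group Γ] (k : ℕ) [NeZero k] (X Y : Γ) (hX : X ^ k = 1)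
    (hY : Y ^ k = 1) (hc : Commute X Y) (p : Mk k) :
    ψk k X Y hX hY hc p =
      X ^ (Multiplicative.toAdd p).1.val * Y ^ (Multiplicative.toAdd p).2.val := rfl

theorem pow_val_one {Γ : Type*} [Group Γ] (k : ℕ) [NeZero k] (X : Γ) (hX : X ^ k = 1) :
    X ^ (1 : ZMod k).val = X := by
  rcases k with _ | k
  · exact absurd rfl (NeZero.ne 0)
  rcases k with _ | k
  · -- k = 1
    have : X = 1 := by rw [← pow_one X]; exact hX
    simp [this]
  · haveI : Fact (1 < k + 1 + 1) := ⟨by omega⟩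
    rw [ZMod.val_one]
    exact pow_one X

theorem ψk_xg {Γ : Type*} [Group Γ] (k : ℕ) [NeZero k] (X Y : Γ) (hX : X ^ k = 1)
    (hY : Y ^ k = 1) (hc : Commute X Y) : ψk k X Y hX hY hc (xg k) = X := by
  rw [ψk_apply]
  show X ^ (1 : ZMod k).val * Y ^ (0 : ZMod k).val = X
  rw [ZMod.val_zero, pow_zero, mul_one, pow_val_one k X hX]

theorem ψk_yg {Γ : Type*} [Group Γ] (k : ℕ) [NeZero k] (X Y : Γ) (hX : X ^ k = 1)
    (hY : Y ^ k = 1) (hc : Commute X Y) : ψk k X Y hX hY hc (yg k) = Y := by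
  rw [ψk_apply]
  show X ^ (0 : ZMod k).val * Y ^ (1 : ZMod k).val = Y
  rw [ZMod.val_zero, pow_zero, one_mul, pow_val_one k Y hY]

/-- Every element of `Mk k` is a product of powers of the generators. -/
theorem Mk_decomp (k : ℕ) [NeZero k] (p : Mk k) :
    p = xg k ^ (Multiplicative.toAdd p).1.val * yg k ^ (Multiplicative.toAdd p).2.val := by
  apply Multiplicative.toAdd.injective
  show Multiplicative.toAdd p = (Multiplicative.toAdd p).1.val • ((1 : ZMod k), (0 : ZMod k)) +
    (Multiplicative.toAdd p).2.val • ((0 : ZMod k), (1 : ZMod k))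
  rw [Prod.smul_mk, Prod.smul_mk, smul_zero, smul_zero, nsmul_eq_mul, nsmul_eq_mul,
    mul_one, mul_one, Prod.mk_add_mk, zero_add, add_zero, ZMod.natCast_rightInverse,
    ZMod.natCast_rightInverse]

/-- Homomorphisms out of `Mk k` agree if they agree on the generators. -/
theorem Mk_hom_ext {Γ : Type*} [Group Γ] (k : ℕ) [NeZero k] (f₁ f₂ : Mk k →* Γ)
    (hx : f₁ (xg k) = f₂ (xg k)) (hy : f₁ (yg k) = f₂ (yg k)) : f₁ = f₂ := by
  refine MonoidHom.ext fun p => ?_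
  rw [Mk_decomp k p, map_mul, map_mul, map_pow, map_pow, map_pow, map_pow, hx, hy]

open HNNExtension in
/-- A homomorphism `HG k →* Γ` from suitable `X`, `T`. -/
def hgLift {Γ : Type*} [Group Γ] (k : ℕ) [NeZero k] (X T : Γ) (hX : X ^ k = 1)
    (hc : Commute X (T * X * T⁻¹)) : HG k →* Γ :=
  HNNExtension.lift
    (ψk k X (T * X * T⁻¹) hX (by rw [conj_pow, hX, mul_one, mul_inv_cancel]) hc) T
    (by
      rintro ⟨a, z, rfl⟩
      set Y := T * X * T⁻¹ with hY
      have hXk : (T * X * T⁻¹) ^ k = 1 := by rw [conj_pow, hX, mul_one, mul_inv_cancel]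
      have h1 : ∀ w : ℤ, (ψk k X Y hX hXk hc) ((xg k) ^ w) = X ^ w := by
        intro w
        rw [map_zpow, ψk_xg]
      have h2 : ((φk k) ⟨xg k ^ z, ⟨z, rfl⟩⟩ : Mk k) = yg k ^ z := by
        rw [φk_coe]
        show swE k ((xg k) ^ z) = _
        rw [map_zpow, swE_xg]
      rw [h1, h2, map_zpow, ψk_yg, conj_zpow]
      simp [mul_assoc])


theorem hgLift_of {Γ : Type*} [Group Γ] (k : ℕ) [NeZero k] (X T : Γ) (hX : X ^ k = 1)
    (hc : Commute X (T * X * T⁻¹)) (p : Mk k) :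
    hgLift k X T hX hc (HNNExtension.of p) =
      ψk k X (T * X * T⁻¹) hX (by rw [conj_pow, hX, mul_one, mul_inv_cancel]) hc p :=
  HNNExtension.lift_of _ _ _ _

theorem hgLift_t {Γ : Type*} [Group Γ] (k : ℕ) [NeZero k] (X T : Γ) (hX : X ^ k = 1)
    (hc : Commute X (T * X * T⁻¹)) : hgLift k X T hX hc HNNExtension.t = T :=
  HNNExtension.lift_t _ _ _

end Construction

section Main

open Monoid HNNExtension

/-- Commutation from the `ρ` relation. -/
theorem comm_of_rho {G : Type*} [Group G] {k : ℕ} {x t : G} (h : rhoWord k x t = 1)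
    (hx : x ^ k = 1) : Commute x (t * x * t⁻¹) := by
  have hz : x ^ (-(k + 1 : ℤ)) = x⁻¹ := by
    have h1 : ((k : ℤ) + 1) = ((k + 1 : ℕ) : ℤ) := by push_cast; ring
    rw [zpow_neg, h1, zpow_natCast, pow_succ, hx, one_mul]
  rw [rhoWord, hz] at h
  have h2 : (t * x * t⁻¹) * x * (t * x * t⁻¹)⁻¹ = x := by
    have := congrArg (fun y => y * x) h
    simpa [mul_assoc] using this
  show x * (t * x * t⁻¹) = (t * x * t⁻¹) * x
  calc x * (t * x * t⁻¹) = ((t * x * t⁻¹) * x * (t * x * t⁻¹)⁻¹) * (t * x * t⁻¹) := by rw [h2]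
    _ = (t * x * t⁻¹) * x := by simp [mul_assoc]

variable (m n : ℕ)

abbrev rels : Set (FreeGroup (Fin 4)) :=
  {rhoWord m (FreeGroup.of 0) (FreeGroup.of 1),
   rhoWord n (FreeGroup.of 2) (FreeGroup.of 3),
   FreeGroup.of 0 ^ m, FreeGroup.of 2 ^ n}

abbrev Gamma : Type := PresentedGroup (rels m n)

theorem rel_one {r : FreeGroup (Fin 4)} (hr : r ∈ rels m n) :
    PresentedGroup.mk (rels m n) r = 1 :=
  (QuotientGroup.eq_one_iff r).mpr (Subgroup.subset_normalClosure hr)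

theorem gamma_rho_m : rhoWord m (PresentedGroup.of 0 : Gamma m n) (PresentedGroup.of 1) = 1 := by
  have := rel_one m n (r := rhoWord m (FreeGroup.of 0) (FreeGroup.of 1)) (by left; rfl)
  rwa [map_rhoWord] at this

theorem gamma_rho_n : rhoWord n (PresentedGroup.of 2 : Gamma m n) (PresentedGroup.of 3) = 1 := by
  have := rel_one m n (r := rhoWord n (FreeGroup.of 2) (FreeGroup.of 3)) (by right; left; rfl)
  rwa [map_rhoWord] at this

theorem gamma_pow_m : (PresentedGroup.of 0 : Gamma m n) ^ m = 1 := by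
  have := rel_one m n (r := FreeGroup.of 0 ^ m) (by right; right; left; rfl)
  rwa [map_pow] at this

theorem gamma_pow_n : (PresentedGroup.of 2 : Gamma m n) ^ n = 1 := by
  have := rel_one m n (r := FreeGroup.of 2 ^ n) (by right; right; right; rfl)
  rwa [map_pow] at this

/-- The family of the two HNN factors, indexed by `Bool` (`true` for the `m` part). -/
def G2 : Bool → Type := fun b => cond b (HG m) (HG n)

noncomputable instance : ∀ b, Group (G2 m n b) := fun b => by
  cases b
  · exact inferInstanceAs (Group (HG n))
  · exact inferInstanceAs (Group (HG m))

abbrev K : Type := CoprodI (G2 m n)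

noncomputable def inm : HG m →* K m n := (CoprodI.of : G2 m n true →* K m n)
noncomputable def inn : HG n →* K m n := (CoprodI.of : G2 m n false →* K m n)

/-- Images of the four generators. -/
noncomputable def fmap : Fin 4 → K m n :=
  ![inm m n (HNNExtension.of (xg m)), inm m n HNNExtension.t,
    inn m n (HNNExtension.of (xg n)), inn m n HNNExtension.t]

theorem fmap_rels : ∀ r ∈ rels m n, FreeGroup.lift (fmap m n) r = 1 := by
  intro r hr
  rcases hr with rfl | rfl | rfl | rfl
  · rw [map_rhoWord]
    simp only [FreeGroup.lift_apply_of]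
    show rhoWord m (inm m n (HNNExtension.of (xg m))) (inm m n HNNExtension.t) = 1
    rw [← map_rhoWord, HG_rho, map_one]
  · rw [map_rhoWord]
    simp only [FreeGroup.lift_apply_of]
    show rhoWord n (inn m n (HNNExtension.of (xg n))) (inn m n HNNExtension.t) = 1
    rw [← map_rhoWord, HG_rho, map_one]
  · rw [map_pow]
    simp only [FreeGroup.lift_apply_of]
    show (inm m n (HNNExtension.of (xg m))) ^ m = 1
    rw [← map_pow, HG_x_pow, map_one]
  · rw [map_pow]
    simp only [FreeGroup.lift_apply_of]
    show (inn m n (HNNExtension.of (xg n))) ^ n = 1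
    rw [← map_pow, HG_x_pow, map_one]

noncomputable def fhom : Gamma m n →* K m n := PresentedGroup.toGroup (fmap_rels m n)

theorem fhom_of (i : Fin 4) : fhom m n (PresentedGroup.of i) = fmap m n i :=
  PresentedGroup.toGroup.of _

section WithNeZero
variable [NeZero m] [NeZero n]

noncomputable def gm : HG m →* Gamma m n :=
  hgLift m (PresentedGroup.of 0) (PresentedGroup.of 1) (gamma_pow_m m n)
    (comm_of_rho (gamma_rho_m m n) (gamma_pow_m m n))

noncomputable def gn : HG n →* Gamma m n :=
  hgLift n (PresentedGroup.of 2) (PresentedGroup.of 3) (gamma_pow_n m n)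
    (comm_of_rho (gamma_rho_n m n) (gamma_pow_n m n))

noncomputable def ghom : K m n →* Gamma m n :=
  CoprodI.lift (fun b => Bool.rec (motive := fun b => G2 m n b →* Gamma m n)
    (gn m n) (gm m n) b)

theorem ghom_inm (x : HG m) : ghom m n (inm m n x) = gm m n x :=
  CoprodI.lift_of (M := G2 m n) (i := true) _ x

theorem ghom_inn (x : HG n) : ghom m n (inn m n x) = gn m n x :=
  CoprodI.lift_of (M := G2 m n) (i := false) _ x

theorem ghom_fhom (x : Gamma m n) : ghom m n (fhom m n x) = x := by
  have : (ghom m n).comp (fhom m n) = MonoidHom.id _ := by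
    apply PresentedGroup.ext
    intro i
    rw [MonoidHom.comp_apply, MonoidHom.id_apply, fhom_of]
    fin_cases i
    · show ghom m n (inm m n (HNNExtension.of (xg m))) = _
      rw [ghom_inm, gm, hgLift_of, ψk_xg]
      rfl
    · show ghom m n (inm m n HNNExtension.t) = _
      rw [ghom_inm, gm, hgLift_t]
      rfl
    · show ghom m n (inn m n (HNNExtension.of (xg n))) = _
      rw [ghom_inn, gn, hgLift_of, ψk_xg]
      rfl
    · show ghom m n (inn m n HNNExtension.t) = _
      rw [ghom_inn, gn, hgLift_t]
      rfl
  calc ghom m n (fhom m n x) = ((ghom m n).comp (fhom m n)) x := rfl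
    _ = x := by rw [this, MonoidHom.id_apply]

theorem fhom_ghom_n : ((fhom m n).comp (ghom m n)).comp (inn m n) =
    (MonoidHom.id (K m n)).comp (inn m n) := by
  apply HNNExtension.hom_ext
  · apply Mk_hom_ext n
    · show fhom m n (ghom m n (inn m n (HNNExtension.of (xg n)))) =
        inn m n (HNNExtension.of (xg n))
      rw [ghom_inn, gn, hgLift_of, ψk_xg]
      exact fhom_of m n 2
    · show fhom m n (ghom m n (inn m n (HNNExtension.of (yg n)))) =
        inn m n (HNNExtension.of (yg n))
      rw [ghom_inn, gn, hgLift_of, ψk_yg]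
      rw [map_mul, map_mul, map_inv]
      rw [fhom_of, fhom_of]
      show inn m n HNNExtension.t * inn m n (HNNExtension.of (xg n)) *
        (inn m n HNNExtension.t)⁻¹ = _
      rw [← map_inv, ← map_mul, ← map_mul, HG_t_x_t]
  · show fhom m n (ghom m n (inn m n HNNExtension.t)) = inn m n HNNExtension.t
    rw [ghom_inn, gn, hgLift_t]
    exact fhom_of m n 3

theorem fhom_ghom_m : ((fhom m n).comp (ghom m n)).comp (inm m n) =
    (MonoidHom.id (K m n)).comp (inm m n) := by
  apply HNNExtension.hom_ext
  · apply Mk_hom_ext m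
    · show fhom m n (ghom m n (inm m n (HNNExtension.of (xg m)))) =
        inm m n (HNNExtension.of (xg m))
      rw [ghom_inm, gm, hgLift_of, ψk_xg]
      exact fhom_of m n 0
    · show fhom m n (ghom m n (inm m n (HNNExtension.of (yg m)))) =
        inm m n (HNNExtension.of (yg m))
      rw [ghom_inm, gm, hgLift_of, ψk_yg]
      rw [map_mul, map_mul, map_inv]
      rw [fhom_of, fhom_of]
      show inm m n HNNExtension.t * inm m n (HNNExtension.of (xg m)) *
        (inm m n HNNExtension.t)⁻¹ = _
      rw [← map_inv, ← map_mul, ← map_mul, HG_t_x_t]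
  · show fhom m n (ghom m n (inm m n HNNExtension.t)) = inm m n HNNExtension.t
    rw [ghom_inm, gm, hgLift_t]
    exact fhom_of m n 1

theorem fhom_ghom (x : K m n) : fhom m n (ghom m n x) = x := by
  have h : (fhom m n).comp (ghom m n) = MonoidHom.id _ := by
    apply CoprodI.ext_hom
    intro b
    cases b
    · exact fhom_ghom_n m n
    · exact fhom_ghom_m m n
  calc fhom m n (ghom m n x) = ((fhom m n).comp (ghom m n)) x := rfl
    _ = x := by rw [h, MonoidHom.id_apply]

theorem conj_isOfFinOrder' {G : Type*} [Group G] {g : G} (c : G) (h : IsOfFinOrder g) :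
    IsOfFinOrder (c * g * c⁻¹) := by
  rw [isOfFinOrder_iff_pow_eq_one] at h ⊢
  obtain ⟨k, hk, h⟩ := h
  exact ⟨k, hk, by rw [conj_pow, h, mul_one, mul_inv_cancel]⟩

end WithNeZero

end Main

end MyTorsion

open MyTorsion in
/-- For `m, n ≥ 1`, every element of finite order in the presented group
`Γ_{m,n} = ⟨x_m, t_m, x_n, t_n | ρ_m(x_m,t_m), ρ_n(x_n,t_n), x_m^m, x_n^n⟩` is conjugate
in `Γ_{m,n}` to an element of the subgroup `H_m = ⟨x_m, t_m x_m t_m⁻¹⟩` or to an element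
of the subgroup `H_n = ⟨x_n, t_n x_n t_n⁻¹⟩`. -/
theorem torsion_conjugate_into_Hm_or_Hn (m n : ℕ) (hm : 1 ≤ m) (hn : 1 ≤ n)
    (Xm Tm Xn Tn : PresentedGroup
      ({rhoWord m (FreeGroup.of 0) (FreeGroup.of 1),
        rhoWord n (FreeGroup.of 2) (FreeGroup.of 3),
        FreeGroup.of 0 ^ m, FreeGroup.of 2 ^ n} : Set (FreeGroup (Fin 4))))
    (hXm : Xm = PresentedGroup.of 0) (hTm : Tm = PresentedGroup.of 1)
    (hXn : Xn = PresentedGroup.of 2) (hTn : Tn = PresentedGroup.of 3)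
    (Hm Hn : Subgroup (PresentedGroup
      ({rhoWord m (FreeGroup.of 0) (FreeGroup.of 1),
        rhoWord n (FreeGroup.of 2) (FreeGroup.of 3),
        FreeGroup.of 0 ^ m, FreeGroup.of 2 ^ n} : Set (FreeGroup (Fin 4)))))
    (hHm : Hm = Subgroup.closure {Xm, Tm * Xm * Tm⁻¹})
    (hHn : Hn = Subgroup.closure {Xn, Tn * Xn * Tn⁻¹}) :
    ∀ g, IsOfFinOrder g →
      (∃ h ∈ Hm, IsConj g h) ∨ (∃ h ∈ Hn, IsConj g h) := by
  subst hXm hTm hXn hTn hHm hHn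
  haveI : NeZero m := ⟨by omega⟩
  haveI : NeZero n := ⟨by omega⟩
  intro g hg
  have hfg : IsOfFinOrder (fhom m n g) := (fhom m n).isOfFinOrder hg
  obtain ⟨b, h, c, hc⟩ := coprodI_torsion_conj (fhom m n g) hfg
  have hfin_h : IsOfFinOrder h := by
    have h1 : IsOfFinOrder (Monoid.CoprodI.of h) := by
      have h2 : Monoid.CoprodI.of h = c⁻¹ * (fhom m n g) * c := by
        rw [← hc]; simp [mul_assoc]
      rw [h2]
      simpa using conj_isOfFinOrder' c⁻¹ hfg
    rw [isOfFinOrder_iff_pow_eq_one] at h1 ⊢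
    obtain ⟨k, hk, h1⟩ := h1
    refine ⟨k, hk, Monoid.CoprodI.of_injective b ?_⟩
    rw [map_pow, h1, map_one]
  cases b
  · -- n part
    right
    obtain ⟨c', a, hc'⟩ := hnn_torsion_conj (φ := φk n) h hfin_h
    have hchain : fhom m n g = (c * inn m n c') * inn m n (HNNExtension.of a) *
        (c * inn m n c')⁻¹ := by
      rw [← hc]
      have : (Monoid.CoprodI.of h : K m n) = inn m n h := rfl
      rw [this, ← hc', map_mul, map_mul, map_inv]
      simp [mul_assoc]
    have hg_eq : g = ghom m n (c * inn m n c') * gn m n (HNNExtension.of a) *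
        (ghom m n (c * inn m n c'))⁻¹ := by
      have := congrArg (ghom m n) hchain
      rw [ghom_fhom] at this
      rw [this, map_mul, map_mul, map_inv, ghom_inn]
    set X : Gamma m n := PresentedGroup.of 2 with hX
    set T : Gamma m n := PresentedGroup.of 3 with hT
    have hval : gn m n (HNNExtension.of a) =
        X ^ (Multiplicative.toAdd a).1.val * (T * X * T⁻¹) ^ (Multiplicative.toAdd a).2.val := by
      rw [gn, hgLift_of, ψk_apply]
    refine ⟨gn m n (HNNExtension.of a), ?_, ?_⟩
    · rw [hval]
      refine Subgroup.mul_mem _ (Subgroup.pow_mem _ ?_ _) (Subgroup.pow_mem _ ?_ _)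
      · exact Subgroup.subset_closure (Set.mem_insert _ _)
      · exact Subgroup.subset_closure (Set.mem_insert_of_mem _ rfl)
    · rw [isConj_iff]
      refine ⟨(ghom m n (c * inn m n c'))⁻¹, ?_⟩
      rw [hg_eq]
      simp [mul_assoc]
  · -- m part
    left
    obtain ⟨c', a, hc'⟩ := hnn_torsion_conj (φ := φk m) h hfin_h
    have hchain : fhom m n g = (c * inm m n c') * inm m n (HNNExtension.of a) *
        (c * inm m n c')⁻¹ := by
      rw [← hc]
      have : (Monoid.CoprodI.of h : K m n) = inm m n h := rfl
      rw [this, ← hc', map_mul, map_mul, map_inv]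
      simp [mul_assoc]
    have hg_eq : g = ghom m n (c * inm m n c') * gm m n (HNNExtension.of a) *
        (ghom m n (c * inm m n c'))⁻¹ := by
      have := congrArg (ghom m n) hchain
      rw [ghom_fhom] at this
      rw [this, map_mul, map_mul, map_inv, ghom_inm]
    set X : Gamma m n := PresentedGroup.of 0 with hX
    set T : Gamma m n := PresentedGroup.of 1 with hT
    have hval : gm m n (HNNExtension.of a) =
        X ^ (Multiplicative.toAdd a).1.val * (T * X * T⁻¹) ^ (Multiplicative.toAdd a).2.val := by
      rw [gm, hgLift_of, ψk_apply]
    refine ⟨gm m n (HNNExtension.of a), ?_, ?_⟩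
    · rw [hval]
      refine Subgroup.mul_mem _ (Subgroup.pow_mem _ ?_ _) (Subgroup.pow_mem _ ?_ _)
      · exact Subgroup.subset_closure (Set.mem_insert _ _)
      · exact Subgroup.subset_closure (Set.mem_insert_of_mem _ rfl)
    · rw [isConj_iff]
      refine ⟨(ghom m n (c * inm m n c'))⁻¹, ?_⟩
      rw [hg_eq]
      simp [mul_assoc]
end
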